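/- arXiv:1005.2789 — 3 statements merged into one kernel-verified Lean document; each statement's English description precedes it below -/
import Mathlib

section
/- For every integer q ≥ 0 and every real s, (1/(q! 2^q √π)) ∫_ℝ e^{ist} e^{-t²} H_q(t)² dt = L_q(s²/2) e^{-s²/4}, where H_q is the Hermite polynomial and L_q the Laguerre polynomial. -/
open MeasureTheory Real

/-- Hermite polynomials `H_q(t) = e^{t²/2} (d/dt - t)^q e^{-t²/2}` (3.11). -/
noncomputable def hermQ (q : ℕ) : ℝ → ℝ :=
  fun t => Real.exp (t ^ 2 / 2) *
    ((fun f : ℝ → ℝ => fun s => deriv f s - s * f s)^[q] (fun s => Real.exp (-(s ^ 2) / 2))) t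

/-- Laguerre polynomials `L_q(ξ) = (1/q!) e^ξ (d/dξ)^q (ξ^q e^{-ξ})`. -/
noncomputable def laguQ (q : ℕ) : ℝ → ℝ :=
  fun ξ => (q.factorial : ℝ)⁻¹ * Real.exp ξ *
    iteratedDeriv q (fun x : ℝ => x ^ q * Real.exp (-x)) ξ

/-- Normalized eigenfunctions of the harmonic oscillator `-d²/dt² + B²t²` (3.10). -/
noncomputable def oscFun (j : ℕ) (B t : ℝ) : ℝ :=
  B ^ ((1 : ℝ) / 4) / Real.sqrt ((j - 1).factorial * 2 ^ (j - 1) * Real.sqrt π) *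
    hermQ (j - 1) (Real.sqrt B * t) * Real.exp (-(B * t ^ 2) / 2)

/-- `I_j(s; B) = ∫ sin(st) t φ_j(t;B)² dt`. -/
noncomputable def oscI (j : ℕ) (B s : ℝ) : ℝ :=
  ∫ t : ℝ, Real.sin (s * t) * t * (oscFun j B t) ^ 2

/-- The odd polynomial function `𝒫_j(s) = (s/2)(L_{j-1}(s²/2) - 2 L'_{j-1}(s²/2))`. -/
noncomputable def oscP (j : ℕ) (s : ℝ) : ℝ :=
  s / 2 * (laguQ (j - 1) (s ^ 2 / 2) - 2 * deriv (laguQ (j - 1)) (s ^ 2 / 2))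

/-- Fourier coefficients `α_l = ∫₀¹ a(t) e^{-2πilt} dt`. -/
noncomputable def fourCoef (a : ℝ → ℝ) (l : ℕ) : ℂ :=
  ∫ t in (0 : ℝ)..1, (a t : ℂ) * Complex.exp (-(2 * π * l * t) * Complex.I)

/-- `F_j(k; B) = ∫ a(t + k/B) t φ_j(t;B)² dt` (3.17). -/
noncomputable def oscF (a : ℝ → ℝ) (j : ℕ) (B k : ℝ) : ℝ :=
  ∫ t : ℝ, a (t + k / B) * t * (oscFun j B t) ^ 2

namespace HFL
open Polynomial Finset Filter



noncomputable def ph : ℕ → Polynomial ℝ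
  | 0 => 1
  | (q+1) => (ph q).derivative - C 2 * X * ph q

lemma hasDerivAt_poly_halfgauss (p : Polynomial ℝ) (t : ℝ) :
    HasDerivAt (fun t : ℝ => p.eval t * rexp (-(t ^ 2) / 2))
      ((p.derivative - X * p).eval t * rexp (-(t ^ 2) / 2)) t := by
  have h2 : HasDerivAt (fun t : ℝ => -(t ^ 2) / 2) (-t) t := by
    have := ((hasDerivAt_pow 2 t).fun_neg).div_const 2
    refine this.congr_deriv ?_
    ring
  have h1 : HasDerivAt (fun t : ℝ => rexp (-(t ^ 2) / 2)) (-t * rexp (-(t ^ 2) / 2)) t := by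
    simpa [mul_comm] using h2.exp
  have := (p.hasDerivAt t).fun_mul h1
  refine this.congr_deriv ?_
  simp [Polynomial.eval_sub, Polynomial.eval_mul]
  ring

lemma iterate_op_eq (q : ℕ) :
    ((fun f : ℝ → ℝ => fun s => deriv f s - s * f s)^[q] (fun s => Real.exp (-(s ^ 2) / 2)))
      = fun t => (ph q).eval t * rexp (-(t ^ 2) / 2) := by
  induction q with
  | zero => simp [ph]
  | succ q ih =>
    rw [Function.iterate_succ_apply', ih]
    funext t
    have hd := (hasDerivAt_poly_halfgauss (ph q) t).deriv
    simp only [hd, ph]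
    simp [Polynomial.eval_sub, Polynomial.eval_mul]
    ring

lemma hermQ_eq (q : ℕ) (t : ℝ) : hermQ q t = (ph q).eval t := by
  rw [hermQ, iterate_op_eq]
  rw [show t ^ 2 / 2 = -(-(t^2)/2) by ring, Real.exp_neg]
  field_simp

lemma ph_derivative : ∀ n : ℕ, (ph n).derivative = Polynomial.C (-2 * (n : ℝ)) * ph (n - 1)
  | 0 => by simp [ph]
  | 1 => by
      show (Polynomial.derivative ((1:Polynomial ℝ).derivative - C 2 * X * 1)) = _
      simp [ph]
  | (k+2) => by
      have ih1 : (ph (k+1)).derivative = Polynomial.C (-2 * ((k:ℝ)+1)) * ph k := by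
        have := ph_derivative (k+1)
        push_cast at this
        simpa using this
      have hDk : (ph k).derivative = ph (k+1) + C 2 * X * ph k := by
        show _ = (ph k).derivative - C 2 * X * ph k + C 2 * X * ph k
        ring
      rw [show ph (k+2) = (ph (k+1)).derivative - C 2 * X * ph (k+1) from rfl,
        show k + 2 - 1 = k + 1 from rfl]
      push_cast
      rw [derivative_sub, ih1, derivative_mul, derivative_mul, derivative_C, derivative_mul, derivative_X, derivative_C,
        ih1, hDk]
      rw [show (-2 * (((k:ℕ):ℝ)+2)) = (-2*((k:ℝ)+1)) + (-2) by push_cast; ring, C_add,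
        show ((-2:ℝ)) = -(2:ℝ) from rfl, map_neg]
      ring

lemma pow_gauss_bound (n : ℕ) (t : ℝ) :
    |t| ^ n * rexp (-t ^ 2) ≤ n.factorial * rexp (1/2) * rexp (-(1/2) * t ^ 2) := by
  have h1 : |t| ^ n ≤ n.factorial * rexp |t| := by
    have h2 := Real.sum_le_exp_of_nonneg (abs_nonneg t) (n+1)
    have h3 : |t| ^ n / n.factorial ≤ ∑ i ∈ Finset.range (n+1), |t| ^ i / i.factorial := by
      exact Finset.single_le_sum (f := fun i => |t| ^ i / (i.factorial : ℝ))
        (fun i _ => by positivity) (Finset.self_mem_range_succ n)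
    have h4 : |t| ^ n / n.factorial ≤ rexp |t| := h3.trans h2
    have h5 : (0:ℝ) < n.factorial := by positivity
    calc |t| ^ n = (|t| ^ n / n.factorial) * n.factorial := by field_simp
    _ ≤ rexp |t| * n.factorial := by apply mul_le_mul_of_nonneg_right h4 h5.le
    _ = n.factorial * rexp |t| := by ring
  calc |t| ^ n * rexp (-t ^ 2) ≤ (n.factorial * rexp |t|) * rexp (-t ^ 2) := by
        apply mul_le_mul_of_nonneg_right h1 (exp_pos _).le
  _ = n.factorial * rexp (|t| - t ^ 2) := by rw [mul_assoc, ← Real.exp_add]; ring_nf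
  _ ≤ n.factorial * rexp (1/2 + -(1/2) * t ^ 2) := by
        apply mul_le_mul_of_nonneg_left _ (by positivity)
        apply Real.exp_le_exp.2
        nlinarith [sq_nonneg (|t| - 1), sq_abs t]
  _ = n.factorial * rexp (1/2) * rexp (-(1/2) * t ^ 2) := by rw [Real.exp_add]; ring

lemma integrable_pow_gauss (n : ℕ) : Integrable fun t : ℝ => t ^ n * rexp (-t ^ 2) := by
  apply Integrable.mono' (((integrable_exp_neg_mul_sq (by norm_num : (0:ℝ) < 1/2)).const_mul
    (n.factorial * rexp (1/2))))
  · exact ((continuous_pow n).mul (by continuity)).aestronglyMeasurable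
  · filter_upwards with t
    rw [norm_mul, norm_pow, Real.norm_eq_abs, Real.norm_eq_abs,
      abs_of_nonneg (exp_pos _).le, mul_assoc]
    exact (pow_gauss_bound n t).trans (le_of_eq (by ring))

lemma integrable_poly_gauss (p : Polynomial ℝ) :
    Integrable fun t : ℝ => p.eval t * rexp (-t ^ 2) := by
  have : (fun t : ℝ => p.eval t * rexp (-t ^ 2))
      = fun t => ∑ i ∈ Finset.range (p.natDegree + 1), p.coeff i * (t ^ i * rexp (-t ^ 2)) := by
    funext t
    rw [eval_eq_sum_range, Finset.sum_mul]
    congr 1; funext i; ring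
  rw [this]
  exact integrable_finset_sum _ fun i _ => (integrable_pow_gauss i).const_mul _

lemma tendsto_gauss_half : Tendsto (fun t : ℝ => rexp (-(1/2) * t ^ 2)) (cocompact ℝ) (nhds 0) := by
  have h1 : Tendsto (fun t : ℝ => t ^ 2) (cocompact ℝ) atTop := by
    have := (tendsto_pow_atTop (two_ne_zero)).comp (tendsto_norm_cocompact_atTop (E := ℝ))
    convert this using 2 with t
    simp [Function.comp, sq_abs]
  have h2 : Tendsto (fun t : ℝ => -(1/2) * t ^ 2) (cocompact ℝ) atBot := by
    have := Tendsto.const_mul_atTop (by norm_num : (0:ℝ) < 1/2) h1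
    have h3 := tendsto_neg_atTop_atBot.comp this
    convert h3 using 2 with t
    simp only [Function.comp_apply]
    ring
  exact Real.tendsto_exp_atBot.comp h2

lemma tendsto_poly_gauss (p : Polynomial ℝ) :
    Tendsto (fun t : ℝ => p.eval t * rexp (-t ^ 2)) (cocompact ℝ) (nhds 0) := by
  set C : ℝ := ∑ i ∈ Finset.range (p.natDegree + 1),
    |p.coeff i| * (i.factorial * rexp (1/2)) with hC
  have hb : ∀ t : ℝ, ‖p.eval t * rexp (-t ^ 2)‖ ≤ C * rexp (-(1/2) * t ^ 2) := by
    intro t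
    rw [norm_mul, Real.norm_eq_abs, Real.norm_eq_abs, abs_of_nonneg (exp_pos _).le]
    calc |p.eval t| * rexp (-t ^ 2)
        ≤ (∑ i ∈ Finset.range (p.natDegree + 1), |p.coeff i| * |t| ^ i) * rexp (-t ^ 2) := by
          apply mul_le_mul_of_nonneg_right _ (exp_pos _).le
          rw [eval_eq_sum_range]
          refine (Finset.abs_sum_le_sum_abs _ _).trans ?_
          apply Finset.sum_le_sum
          intro i _
          rw [abs_mul, abs_pow]
      _ = ∑ i ∈ Finset.range (p.natDegree + 1), |p.coeff i| * (|t| ^ i * rexp (-t ^ 2)) := by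
          rw [Finset.sum_mul]; congr 1; funext i; ring
      _ ≤ ∑ i ∈ Finset.range (p.natDegree + 1),
            |p.coeff i| * (i.factorial * rexp (1/2) * rexp (-(1/2) * t ^ 2)) := by
          apply Finset.sum_le_sum
          intro i _
          exact mul_le_mul_of_nonneg_left (pow_gauss_bound i t) (abs_nonneg _)
      _ = C * rexp (-(1/2) * t ^ 2) := by
          rw [hC, Finset.sum_mul]; congr 1; funext i; ring
  exact squeeze_zero_norm hb (by simpa using (tendsto_gauss_half.const_mul C))

lemma norm_cexp_Ist (s t : ℝ) : ‖Complex.exp (Complex.I * s * t)‖ = 1 := by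
  rw [Complex.norm_exp]
  simp

lemma integrable_cexp_poly_gauss (s : ℝ) (p : Polynomial ℝ) :
    Integrable fun t : ℝ => Complex.exp (Complex.I * s * t) * ((p.eval t * rexp (-t ^ 2) : ℝ) : ℂ) := by
  apply Integrable.bdd_mul (integrable_poly_gauss p).ofReal
  · refine (Complex.continuous_exp.comp ?_).aestronglyMeasurable
    continuity
  · exact Filter.Eventually.of_forall (fun t => le_of_eq (norm_cexp_Ist s t))

lemma hasDerivAt_poly_gauss (p : Polynomial ℝ) (t : ℝ) :
    HasDerivAt (fun t : ℝ => p.eval t * rexp (-t ^ 2))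
      ((p.derivative - C 2 * X * p).eval t * rexp (-t ^ 2)) t := by
  have h2 : HasDerivAt (fun t : ℝ => -t ^ 2) (-(2*t)) t := by
    simpa using (hasDerivAt_pow 2 t).fun_neg
  have h1 : HasDerivAt (fun t : ℝ => rexp (-t ^ 2)) (-(2*t) * rexp (-t ^ 2)) t := by
    simpa [mul_comm] using h2.exp
  have := (p.hasDerivAt t).fun_mul h1
  refine this.congr_deriv ?_
  simp [Polynomial.eval_sub, Polynomial.eval_mul]
  ring

lemma hasDerivAt_cexp_poly_gauss (s : ℝ) (p : Polynomial ℝ) (t : ℝ) :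
    HasDerivAt (fun t : ℝ => Complex.exp (Complex.I * s * t) * ((p.eval t * rexp (-t ^ 2) : ℝ) : ℂ))
      (Complex.I * s * Complex.exp (Complex.I * s * t) * ((p.eval t * rexp (-t ^ 2) : ℝ) : ℂ)
        + Complex.exp (Complex.I * s * t)
          * (((p.derivative - C 2 * X * p).eval t * rexp (-t ^ 2) : ℝ) : ℂ)) t := by
  have hlin : HasDerivAt (fun t : ℝ => Complex.I * s * t) (Complex.I * s) t := by
    simpa using ((Complex.ofRealCLM.hasDerivAt (x := t)).const_mul (Complex.I * s))
  have hc : HasDerivAt (fun t : ℝ => Complex.exp (Complex.I * s * t))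
      (Complex.exp (Complex.I * s * t) * (Complex.I * s)) t := hlin.cexp
  have hF := (hasDerivAt_poly_gauss p t).ofReal_comp
  have := hc.fun_mul hF
  refine this.congr_deriv ?_
  ring

lemma tendsto_cexp_poly_gauss (s : ℝ) (p : Polynomial ℝ) (l : Filter ℝ)
    (hl : l ≤ cocompact ℝ) :
    Tendsto (fun t : ℝ => Complex.exp (Complex.I * s * t) * ((p.eval t * rexp (-t ^ 2) : ℝ) : ℂ))
      l (nhds 0) := by
  rw [tendsto_zero_iff_norm_tendsto_zero]
  have : ∀ t : ℝ, ‖Complex.exp (Complex.I * s * t) * ((p.eval t * rexp (-t ^ 2) : ℝ) : ℂ)‖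
      = |p.eval t * rexp (-t ^ 2)| := by
    intro t
    rw [norm_mul, norm_cexp_Ist, one_mul, Complex.norm_real, Real.norm_eq_abs]
  simp only [this]
  exact ((tendsto_poly_gauss p).mono_left hl).abs.congr' (by simp) |>.congr (fun _ => rfl) |>.mono_right (by simp [abs_zero])

lemma integral_deriv_cexp_poly_gauss (s : ℝ) (p : Polynomial ℝ) :
    ∫ t : ℝ, (Complex.I * s * Complex.exp (Complex.I * s * t) * ((p.eval t * rexp (-t ^ 2) : ℝ) : ℂ)
      + Complex.exp (Complex.I * s * t)
        * (((p.derivative - C 2 * X * p).eval t * rexp (-t ^ 2) : ℝ) : ℂ)) = 0 := by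
  set g : ℝ → ℂ := fun t => Complex.exp (Complex.I * s * t) * ((p.eval t * rexp (-t ^ 2) : ℝ) : ℂ)
    with hg
  set g' : ℝ → ℂ := fun t =>
    Complex.I * s * Complex.exp (Complex.I * s * t) * ((p.eval t * rexp (-t ^ 2) : ℝ) : ℂ)
      + Complex.exp (Complex.I * s * t)
        * (((p.derivative - C 2 * X * p).eval t * rexp (-t ^ 2) : ℝ) : ℂ) with hg'
  have hderiv : ∀ t : ℝ, HasDerivAt g (g' t) t := fun t => hasDerivAt_cexp_poly_gauss s p t
  have hint : Integrable g' := by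
    apply Integrable.add
    · have := (integrable_cexp_poly_gauss s p).const_mul (Complex.I * s)
      apply this.congr
      filter_upwards with t
      ring
    · exact integrable_cexp_poly_gauss s _
  have htop : Tendsto g atTop (nhds 0) :=
    tendsto_cexp_poly_gauss s p atTop (by rw [cocompact_eq_atBot_atTop]; exact le_sup_right)
  have hbot : Tendsto g atBot (nhds 0) :=
    tendsto_cexp_poly_gauss s p atBot (by rw [cocompact_eq_atBot_atTop]; exact le_sup_left)
  have h1 : ∫ t in Set.Iic (0:ℝ), g' t = g 0 - 0 :=
    integral_Iic_of_hasDerivAt_of_tendsto' (fun x _ => hderiv x) hint.integrableOn hbot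
  have h2 : ∫ t in Set.Ioi (0:ℝ), g' t = 0 - g 0 :=
    integral_Ioi_of_hasDerivAt_of_tendsto' (fun x _ => hderiv x) hint.integrableOn htop
  calc ∫ t : ℝ, g' t
      = (∫ t in Set.Iic (0:ℝ), g' t) + ∫ t in Set.Ioi (0:ℝ), g' t :=
        (intervalIntegral.integral_Iic_add_Ioi hint.integrableOn hint.integrableOn).symm
    _ = 0 := by rw [h1, h2]; ring

lemma integral_parts (s : ℝ) (p : Polynomial ℝ) :
    ∫ t : ℝ, Complex.exp (Complex.I * s * t)
        * (((p.derivative - C 2 * X * p).eval t * rexp (-t ^ 2) : ℝ) : ℂ)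
      = -(Complex.I * s) * ∫ t : ℝ, Complex.exp (Complex.I * s * t)
        * ((p.eval t * rexp (-t ^ 2) : ℝ) : ℂ) := by
  have h0 := integral_deriv_cexp_poly_gauss s p
  have hi1 : Integrable (fun t : ℝ =>
      Complex.I * s * Complex.exp (Complex.I * s * t) * ((p.eval t * rexp (-t ^ 2) : ℝ) : ℂ)) := by
    have := (integrable_cexp_poly_gauss s p).const_mul (Complex.I * s)
    apply this.congr
    filter_upwards with t
    ring
  rw [integral_add hi1 (integrable_cexp_poly_gauss s _)] at h0
  have h4 : ∫ t : ℝ, Complex.I * s * Complex.exp (Complex.I * s * t)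
      * ((p.eval t * rexp (-t ^ 2) : ℝ) : ℂ)
      = Complex.I * s * ∫ t : ℝ, Complex.exp (Complex.I * s * t)
        * ((p.eval t * rexp (-t ^ 2) : ℝ) : ℂ) := by
    rw [← MeasureTheory.integral_const_mul]
    congr 1
    funext t
    ring
  rw [h4] at h0
  linear_combination h0

noncomputable def Kker (m n : ℕ) (s : ℝ) : ℂ :=
  ∫ t : ℝ, Complex.exp (Complex.I * s * t) * (((ph m * ph n).eval t * rexp (-t ^ 2) : ℝ) : ℂ)

lemma Kker_symm (m n : ℕ) (s : ℝ) : Kker m n s = Kker n m s := by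
  unfold Kker
  rw [mul_comm (ph m) (ph n)]

lemma Kker_rec (m n : ℕ) (s : ℝ) :
    Kker (m+1) n s = (2*(n:ℂ)) * Kker m (n-1) s + (-(Complex.I * s)) * Kker m n s := by
  have hpoly : (ph m * ph n).derivative - C 2 * X * (ph m * ph n)
      = ph (m+1) * ph n + C (-2 * (n:ℝ)) * (ph m * ph (n-1)) := by
    rw [derivative_mul, ph_derivative n]
    rw [show ph (m+1) = (ph m).derivative - C 2 * X * ph m from rfl]
    ring
  have h0 := integral_parts s (ph m * ph n)
  rw [hpoly] at h0
  have hsum : (fun t : ℝ => Complex.exp (Complex.I * s * t)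
      * (((ph (m+1) * ph n + C (-2 * (n:ℝ)) * (ph m * ph (n-1))).eval t * rexp (-t ^ 2) : ℝ) : ℂ))
      = fun t : ℝ => Complex.exp (Complex.I * s * t)
          * (((ph (m+1) * ph n).eval t * rexp (-t ^ 2) : ℝ) : ℂ)
        + (-2 * (n:ℂ)) * (Complex.exp (Complex.I * s * t)
          * (((ph m * ph (n-1)).eval t * rexp (-t ^ 2) : ℝ) : ℂ)) := by
    funext t
    simp only [Polynomial.eval_add, Polynomial.eval_mul, Polynomial.eval_C]
    push_cast
    ring
  rw [hsum] at h0
  rw [integral_add (integrable_cexp_poly_gauss s _)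
    (((integrable_cexp_poly_gauss s (ph m * ph (n-1))).const_mul _))] at h0
  rw [MeasureTheory.integral_const_mul] at h0
  unfold Kker
  linear_combination h0

lemma Kker_base0 (m : ℕ) (s : ℝ) : Kker m 0 s = (-(Complex.I * s))^m * Kker 0 0 s := by
  induction m with
  | zero => simp
  | succ m ih =>
    rw [Kker_rec m 0 s, ih]
    push_cast
    ring

noncomputable def Ssum (m n : ℕ) (z : ℂ) : ℂ :=
  ∑ k ∈ Finset.range (n+1),
    ((m.choose k * n.choose k * k.factorial * 2^k : ℕ) : ℂ) * z^(m-k) * z^(n-k)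

lemma Ssum_right0 (m : ℕ) (z : ℂ) : Ssum m 0 z = z^m := by
  simp [Ssum]

lemma Ssum_left0 (n : ℕ) (z : ℂ) : Ssum 0 n z = z^n := by
  unfold Ssum
  rw [Finset.sum_eq_single 0]
  · simp
  · intro k _ hk
    rcases Nat.exists_eq_succ_of_ne_zero hk with ⟨j, rfl⟩
    simp [Nat.choose_eq_zero_of_lt (Nat.succ_pos j)]
  · intro h
    exact absurd (Finset.mem_range.2 (Nat.succ_pos n)) h

lemma Ssum_rec (m n : ℕ) (z : ℂ) :
    Ssum (m+1) n z = z * Ssum m n z + (2*(n:ℂ)) * Ssum m (n-1) z := by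
  cases n with
  | zero =>
    rw [Ssum_right0, Ssum_right0]
    push_cast
    rw [pow_succ]
    ring
  | succ N =>
    rw [show N + 1 - 1 = N from rfl]
    unfold Ssum
    rw [Finset.sum_range_succ' _ (N+1), Finset.mul_sum, Finset.sum_range_succ' _ (N+1),
      Finset.mul_sum]
    have hterm : ∀ i ∈ Finset.range (N+1),
        (((m+1).choose (i+1) * (N+1).choose (i+1) * (i+1).factorial * 2^(i+1) : ℕ) : ℂ)
            * z^(m+1-(i+1)) * z^(N+1-(i+1))
        = z * (((m.choose (i+1) * (N+1).choose (i+1) * (i+1).factorial * 2^(i+1) : ℕ) : ℂ)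
            * z^(m-(i+1)) * z^(N+1-(i+1)))
          + (2*((N:ℂ)+1)) * (((m.choose i * N.choose i * i.factorial * 2^i : ℕ) : ℂ)
            * z^(m-i) * z^(N-i)) := by
      intro i _
      have h1 : (N+1) * N.choose i = (N+1).choose (i+1) * (i+1) := by
        have := Nat.add_one_mul_choose_eq N i
        simpa [Nat.succ_eq_add_one] using this
      have hco : (N+1).choose (i+1) * (i+1).factorial * 2^(i+1)
          = 2*(N+1) * (N.choose i * i.factorial * 2^i) := by
        rw [Nat.factorial_succ, pow_succ]
        calc (N+1).choose (i+1) * ((i+1) * i.factorial) * (2^i * 2)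
            = ((N+1).choose (i+1) * (i+1)) * (i.factorial * (2^i*2)) := by ring
          _ = ((N+1) * N.choose i) * (i.factorial * (2^i*2)) := by rw [← h1]
          _ = 2*(N+1) * (N.choose i * i.factorial * 2^i) := by ring
      have hcoC : (((N+1).choose (i+1) : ℂ)) * (((i+1).factorial : ℕ) : ℂ) * (2:ℂ)^(i+1)
          = 2*((N:ℂ)+1) * ((N.choose i : ℂ) * ((i.factorial : ℕ) : ℂ) * 2^i) := by
        exact_mod_cast congrArg (Nat.cast (R := ℂ)) hco
      rw [Nat.succ_sub_succ, Nat.succ_sub_succ, Nat.choose_succ_succ]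
      by_cases him : i + 1 ≤ m
      · have hexp : m - i = (m - (i+1)) + 1 := by omega
        rw [hexp, pow_succ]
        push_cast at hcoC ⊢
        linear_combination ((m.choose i : ℂ) * z^(m-(i+1)) * z * z^(N-i)) * hcoC
      · have hm0 : m.choose (i+1) = 0 := Nat.choose_eq_zero_of_lt (by omega)
        rw [hm0]
        push_cast at hcoC ⊢
        linear_combination ((m.choose i : ℂ) * z^(m-i) * z^(N-i)) * hcoC
    rw [Finset.sum_congr rfl hterm, Finset.sum_add_distrib]
    simp only [Nat.succ_sub_succ, Nat.sub_zero, Nat.choose_zero_right, Nat.factorial_zero,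
      Nat.cast_one, pow_zero, one_mul, mul_one]
    push_cast
    ring


/-- iterate of `p ↦ p' - p` starting at `X^q` -/
noncomputable def lagp (q : ℕ) : ℕ → Polynomial ℝ
  | 0 => X^q
  | (n+1) => (lagp q n).derivative - lagp q n

lemma lagp_eq_end (q n : ℕ) :
    lagp q n = (((Polynomial.derivative : Module.End ℝ (Polynomial ℝ)) - 1)^n) (X^q : Polynomial ℝ) := by
  induction n with
  | zero => simp [lagp]
  | succ n ih =>
    rw [show lagp q (n+1) = (lagp q n).derivative - lagp q n from rfl, ih, pow_succ']
    simp [Module.End.mul_apply, LinearMap.sub_apply, Module.End.one_apply]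

lemma lagp_closed (q n : ℕ) :
    lagp q n = ∑ k ∈ Finset.range (n+1),
      ((-1:ℝ)^(n-k) * (n.choose k : ℝ)) • (Polynomial.derivative^[k] (X^q : Polynomial ℝ)) := by
  rw [lagp_eq_end]
  have hc : Commute (Polynomial.derivative : Module.End ℝ (Polynomial ℝ))
      (-1 : Module.End ℝ (Polynomial ℝ)) := (Commute.one_right (Polynomial.derivative : Module.End ℝ (Polynomial ℝ))).neg_right
  rw [sub_eq_add_neg, hc.add_pow]
  rw [LinearMap.sum_apply]
  apply Finset.sum_congr rfl
  intro k hk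
  rw [Module.End.mul_apply, Module.End.mul_apply]
  have hnat : ((n.choose k : Module.End ℝ (Polynomial ℝ))) (X^q : Polynomial ℝ)
      = ((n.choose k : ℝ)) • (X^q : Polynomial ℝ) := by
    simp [Module.End.natCast_apply, Polynomial.smul_eq_C_mul, Polynomial.C_eq_natCast]
  rw [hnat]
  have hneg : ((-1 : Module.End ℝ (Polynomial ℝ))^(n-k)) (((n.choose k : ℝ)) • (X^q : Polynomial ℝ))
      = ((-1:ℝ)^(n-k) * (n.choose k : ℝ)) • (X^q : Polynomial ℝ) := by
    have hpow : ((-1 : Module.End ℝ (Polynomial ℝ))^(n-k)) = ((-1:ℝ)^(n-k)) • 1 := by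
      rw [show (-1 : Module.End ℝ (Polynomial ℝ)) = ((-1:ℝ)) • 1 from LinearMap.ext (fun v => by simp), _root_.smul_pow, one_pow]
    rw [hpow]
    simp [LinearMap.smul_apply, smul_smul, mul_comm]
  rw [hneg, _root_.map_smul, Module.End.pow_apply]

lemma hasDerivAt_poly_expneg (p : Polynomial ℝ) (x : ℝ) :
    HasDerivAt (fun x : ℝ => p.eval x * rexp (-x))
      ((p.derivative - p).eval x * rexp (-x)) x := by
  have h1 : HasDerivAt (fun x : ℝ => rexp (-x)) (-rexp (-x)) x := by
    simpa using (hasDerivAt_id x).neg.exp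
  have := (p.hasDerivAt x).fun_mul h1
  refine this.congr_deriv ?_
  simp [Polynomial.eval_sub]
  ring

lemma iteratedDeriv_lag (q n : ℕ) :
    iteratedDeriv n (fun x : ℝ => x ^ q * rexp (-x)) = fun x => (lagp q n).eval x * rexp (-x) := by
  induction n with
  | zero => simp [lagp]
  | succ n ih =>
    rw [iteratedDeriv_succ, ih]
    funext x
    rw [(hasDerivAt_poly_expneg (lagp q n) x).deriv]
    rfl


lemma laguQ_eq (q : ℕ) (ξ : ℝ) :
    laguQ q ξ = (q.factorial : ℝ)⁻¹ *
      ∑ k ∈ Finset.range (q+1),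
        (-1:ℝ)^(q-k) * (q.choose k) * (q.descFactorial k) * ξ^(q-k) := by
  unfold laguQ
  rw [iteratedDeriv_lag q q]
  have hexp : (q.factorial : ℝ)⁻¹ * rexp ξ * ((lagp q q).eval ξ * rexp (-ξ))
      = (q.factorial : ℝ)⁻¹ * (lagp q q).eval ξ := by
    rw [Real.exp_neg]
    have := Real.exp_ne_zero ξ
    field_simp
  rw [hexp]
  congr 1
  rw [lagp_closed, Polynomial.eval_finset_sum]
  apply Finset.sum_congr rfl
  intro k hk
  rw [Polynomial.iterate_derivative_X_pow_eq_smul]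
  simp only [Polynomial.eval_smul, Polynomial.eval_pow, Polynomial.eval_X, smul_eq_mul,
    nsmul_eq_mul]
  push_cast
  ring
lemma Kker_closed (m n : ℕ) (s : ℝ) :
    Kker m n s = Ssum m n (-(Complex.I * s)) * Kker 0 0 s := by
  induction m generalizing n with
  | zero => rw [Kker_symm, Kker_base0, Ssum_left0]
  | succ m ih =>
    rw [Kker_rec, ih, ih, Ssum_rec]
    ring

lemma Kker00 (s : ℝ) : Kker 0 0 s = (Real.sqrt π : ℂ) * Complex.exp (-(s:ℂ)^2/4) := by
  have h := fourierIntegral_gaussian (b := (1:ℂ)) (by norm_num) (s : ℂ)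
  have hi : (fun x : ℝ => Complex.exp (Complex.I * (s:ℂ) * x) * Complex.exp (-(1:ℂ) * x^2))
      = fun t : ℝ => Complex.exp (Complex.I * s * t)
        * (((ph 0 * ph 0).eval t * rexp (-t^2) : ℝ) : ℂ) := by
    funext t
    congr 1
    rw [show (ph 0 * ph 0 : Polynomial ℝ) = 1 from by rw [show ph 0 = 1 from rfl]; ring]
    rw [Polynomial.eval_one, one_mul, Complex.ofReal_exp]
    congr 1
    push_cast
    ring
  unfold Kker
  rw [← hi, h]
  congr 1
  · rw [div_one, show ((1:ℂ)/2) = (((1/2 : ℝ) : ℝ) : ℂ) from by norm_num,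
      ← Complex.ofReal_cpow Real.pi_pos.le, Real.sqrt_eq_rpow]
  · congr 1
    ring

lemma Ssum_diag (q : ℕ) (s : ℝ) :
    Ssum q q (-(Complex.I * s))
      = ∑ k ∈ Finset.range (q+1),
          ((q.choose k * q.choose k * k.factorial * 2^k : ℕ) : ℂ) * (-(s:ℂ)^2)^(q-k) := by
  unfold Ssum
  apply Finset.sum_congr rfl
  intro k _
  rw [mul_assoc, ← mul_pow, mul_assoc]
  congr 2
  linear_combination ((s:ℂ)^2) * Complex.I_sq

lemma sum_lag (q : ℕ) (s : ℝ) :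
    ∑ k ∈ Finset.range (q+1),
        ((q.choose k * q.choose k * k.factorial * 2^k : ℕ) : ℂ) * (-(s:ℂ)^2)^(q-k)
      = 2^q * ∑ k ∈ Finset.range (q+1),
          ((-1:ℂ))^(q-k) * (q.choose k) * (q.descFactorial k) * (((s:ℂ)^2)/2)^(q-k) := by
  rw [Finset.mul_sum]
  apply Finset.sum_congr rfl
  intro k hk
  have hk' : k ≤ q := by
    have := Finset.mem_range.1 hk
    omega
  have hdesc := Nat.descFactorial_eq_factorial_mul_choose q k
  have h2 : (2:ℂ)^q = 2^(q-k) * 2^k := by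
    rw [← pow_add]
    congr 1
    omega
  rw [neg_pow, div_pow, hdesc, h2]
  push_cast
  have h2nz : ((2:ℂ))^(q-k) ≠ 0 := pow_ne_zero _ two_ne_zero
  field_simp

end HFL

/-- `(1/(q! 2^q √π)) ∫ e^{ist} e^{-t²} H_q(t)² dt = L_q(s²/2) e^{-s²/4}` (3.21). -/
theorem hermite_fourier_laguerre (q : ℕ) (s : ℝ) :
    (1 / (q.factorial * 2 ^ q * Real.sqrt π) : ℂ) *
      ∫ t : ℝ, Complex.exp (Complex.I * s * t) * Real.exp (-t ^ 2) * (hermQ q t : ℂ) ^ 2 =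
      ((laguQ q (s ^ 2 / 2) * Real.exp (-s ^ 2 / 4) : ℝ) : ℂ) := by
  have hker : (∫ t : ℝ, Complex.exp (Complex.I * s * t) * Real.exp (-t ^ 2) * (hermQ q t : ℂ) ^ 2)
      = HFL.Kker q q s := by
    unfold HFL.Kker
    congr 1
    funext t
    rw [HFL.hermQ_eq]
    push_cast [Polynomial.eval_mul]
    ring
  rw [hker, HFL.Kker_closed, HFL.Kker00, HFL.Ssum_diag, HFL.sum_lag]
  have hlag : ((laguQ q (s ^ 2 / 2) : ℝ) : ℂ)
      = ((q.factorial : ℂ))⁻¹ * ∑ k ∈ Finset.range (q+1),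
          ((-1:ℂ))^(q-k) * (q.choose k) * (q.descFactorial k) * (((s:ℂ)^2)/2)^(q-k) := by
    rw [HFL.laguQ_eq]
    push_cast
    ring
  have hE : ((Real.exp (-s ^ 2 / 4) : ℝ) : ℂ) = Complex.exp (-(s:ℂ)^2/4) := by
    rw [Complex.ofReal_exp]
    congr 1
    push_cast
    ring
  rw [Complex.ofReal_mul, hlag, hE]
  have hπ : (Real.sqrt π : ℂ) ≠ 0 := by
    simp only [ne_eq, Complex.ofReal_eq_zero]
    exact (Real.sqrt_pos.2 Real.pi_pos).ne'
  have hQ : ((q.factorial : ℂ)) ≠ 0 := by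
    exact_mod_cast Nat.cast_ne_zero.2 (Nat.factorial_ne_zero q)
  have h2 : ((2:ℂ))^q ≠ 0 := pow_ne_zero _ two_ne_zero
  field_simp
end

section
/- For every j ≥ 1 and s ∈ ℝ, the integral I_j(s) := ∫_ℝ sin(st) · t · φ_j(t)² dt, where φ_j is the L²-normalized j-th Hermite function for the harmonic oscillator -d²/dt² + t², equals P_j(s) e^{-s²/4} with P_j(s) = (s/2)(L_{j-1}(s²/2) - 2 L'_{j-1}(s²/2)). -/
open MeasureTheory Real

noncomputable section OscAux
open MeasureTheory Real Polynomial Complex Filter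

/-- The (sign-modified) Hermite polynomials adapted to `hermQ`. -/
noncomputable def Hp : ℕ → Polynomial ℝ
  | 0 => 1
  | (q+1) => derivative (Hp q) - C 2 * X * Hp q

lemma Hp_succ (q : ℕ) : Hp (q+1) = derivative (Hp q) - C 2 * X * Hp q := rfl

lemma hasDerivAt_polyGauss (r : Polynomial ℝ) (t : ℝ) :
    HasDerivAt (fun t : ℝ => eval t r * rexp (-t^2))
      (eval t (derivative r - C 2 * X * r) * rexp (-t^2)) t := by
  have h1 : HasDerivAt (fun t : ℝ => rexp (-t^2)) (-(2*t) * rexp (-t^2)) t := by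
    have : HasDerivAt (fun t : ℝ => -t^2) (-(2*t)) t := by
      simpa using (hasDerivAt_pow 2 t).fun_neg
    simpa [mul_comm] using this.exp
  have := (r.hasDerivAt t).fun_mul h1
  refine this.congr_deriv ?_
  simp only [eval_sub, eval_mul, eval_C, eval_X]
  ring

lemma hasDerivAt_polyGaussHalf (r : Polynomial ℝ) (t : ℝ) :
    HasDerivAt (fun t : ℝ => eval t r * rexp (-(t^2)/2))
      ((eval t (derivative r) - t * eval t r) * rexp (-(t^2)/2)) t := by
  have h1 : HasDerivAt (fun t : ℝ => rexp (-(t^2)/2)) (-t * rexp (-(t^2)/2)) t := by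
    have h0 : HasDerivAt (fun t : ℝ => -(t^2)/2) (-t) t := by
      have h := (hasDerivAt_pow 2 t).fun_neg.div_const 2
      refine h.congr_deriv ?_
      push_cast
      ring
    simpa [mul_comm] using h0.exp
  have := (r.hasDerivAt t).fun_mul h1
  refine this.congr_deriv ?_
  ring

/-- The `hermQ` iterate is a polynomial times a half-Gaussian. -/
lemma hermQ_iterate (q : ℕ) :
    ((fun f : ℝ → ℝ => fun s => deriv f s - s * f s)^[q] (fun s => Real.exp (-(s ^ 2) / 2)))
      = fun t => eval t (Hp q) * rexp (-(t^2)/2) := by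
  induction q with
  | zero => funext t; simp [Hp]
  | succ q ih =>
      rw [Function.iterate_succ_apply', ih]
      funext t
      have hd : deriv (fun t : ℝ => eval t (Hp q) * rexp (-(t^2)/2)) t
          = (eval t (derivative (Hp q)) - t * eval t (Hp q)) * rexp (-(t^2)/2) :=
        (hasDerivAt_polyGaussHalf (Hp q) t).deriv
      simp only [hd, Hp_succ]
      simp only [eval_sub, eval_mul, eval_C, eval_X]
      ring

lemma hermQ_eq_Hp (q : ℕ) (t : ℝ) : hermQ q t = eval t (Hp q) := by
  simp only [hermQ]
  rw [hermQ_iterate]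
  rw [show Real.exp (t^2/2) * (eval t (Hp q) * rexp (-(t^2)/2))
      = eval t (Hp q) * (rexp (t^2/2) * rexp (-(t^2)/2)) from by ring, ← Real.exp_add]
  rw [show t ^ 2 / 2 + -t ^ 2 / 2 = 0 by ring, Real.exp_zero, mul_one]

/-- Rodrigues formula. -/
lemma iter_deriv_gauss (q : ℕ) :
    (deriv^[q] fun t : ℝ => rexp (-t^2)) = fun t => eval t (Hp q) * rexp (-t^2) := by
  induction q with
  | zero => funext t; simp [Hp]
  | succ q ih =>
      rw [Function.iterate_succ_apply', ih]
      funext t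
      rw [(hasDerivAt_polyGauss (Hp q) t).deriv, Hp_succ]

lemma Hp_derivative : ∀ q : ℕ, derivative (Hp (q+1)) = C (-(2*(q+1) : ℝ)) * Hp q := by
  intro q
  induction q with
  | zero =>
      apply Polynomial.funext
      intro t
      simp [Hp]
  | succ q ih =>
      have e2 : derivative (C 2 * X * Hp (q+1)) =
          C 2 * Hp (q+1) + C 2 * X * (C (-(2*(q+1):ℝ)) * Hp q) := by
        rw [derivative_mul, derivative_mul, derivative_C, derivative_X, ih]
        ring
      have e : derivative (Hp (q+1+1)) =
          C (-(2*(q+1):ℝ)) * derivative (Hp q)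
          - (C 2 * Hp (q+1) + C 2 * X * (C (-(2*(q+1):ℝ)) * Hp q)) := by
        rw [Hp_succ (q+1), derivative_sub, ih, derivative_mul, derivative_C, zero_mul, zero_add,
          ← e2]
      rw [e]
      apply Polynomial.funext
      intro t
      simp only [Hp_succ q, eval_sub, eval_mul, eval_add, eval_C, eval_X]
      push_cast
      ring

lemma Hp_iter_derivative (q : ℕ) : ∀ i : ℕ,
    derivative^[i] (Hp q) = C (((-2:ℝ)^i * (q.descFactorial i : ℕ) : ℝ)) * Hp (q - i) := by
  intro i
  induction i with
  | zero => simp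
  | succ i ih =>
      rw [Function.iterate_succ_apply', ih, derivative_mul, derivative_C, zero_mul, zero_add]
      rcases lt_or_ge i q with h | h
      · have h1 : q - i = (q - (i+1)) + 1 := by omega
        have h2 : ((q - i : ℕ) : ℝ) = ((q - (i+1) : ℕ) : ℝ) + 1 := by rw [h1]; push_cast; ring
        rw [h1, Hp_derivative]
        rw [← mul_assoc, ← C_mul]
        congr 2
        rw [Nat.descFactorial_succ]
        push_cast [h2]
        ring
      · have h0 : q - i = 0 := by omega
        have h1 : q - (i+1) = 0 := by omega
        have hd : q.descFactorial (i+1) = 0 := by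
          rw [Nat.descFactorial_succ, h0, zero_mul]
        rw [h0, h1, hd]
        simp [Hp]

end OscAux

section PartB
open MeasureTheory Real Polynomial Complex Filter Finset

lemma pow_le_factorial_mul_exp {x : ℝ} (hx : 0 ≤ x) (i : ℕ) :
    x ^ i ≤ i.factorial * Real.exp x := by
  have h1 : x ^ i / i.factorial ≤ Real.exp x :=
    le_trans (Finset.single_le_sum (f := fun j => x ^ j / j.factorial)
      (fun j _ => by positivity) (Finset.self_mem_range_succ i))
      (Real.sum_le_exp_of_nonneg hx (i+1))
  have h2 : (0:ℝ) < i.factorial := by exact_mod_cast i.factorial_pos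
  calc x ^ i = (x ^ i / i.factorial) * i.factorial := by field_simp
  _ ≤ Real.exp x * i.factorial := by gcongr
  _ = i.factorial * Real.exp x := by ring

lemma integrable_pow_gauss (i : ℕ) : Integrable fun t : ℝ => t^i * rexp (-t^2) := by
  have hg : Integrable fun t : ℝ =>
      ((i.factorial : ℝ) * Real.exp (1/2)) * rexp (-(1/2) * t^2) :=
    (integrable_exp_neg_mul_sq (by norm_num : (0:ℝ) < 1/2)).const_mul _
  apply hg.mono' ?_ ?_
  · exact (((continuous_pow i).mul (Real.continuous_exp.comp
      (continuous_pow 2).neg))).aestronglyMeasurable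
  · filter_upwards with t
    rw [Real.norm_eq_abs]
    calc |t ^ i * rexp (-t^2)| = |t| ^ i * rexp (-t^2) := by
          rw [abs_mul, _root_.abs_pow, Real.abs_exp]
    _ ≤ ((i.factorial : ℝ) * Real.exp |t|) * rexp (-t^2) := by
          have := pow_le_factorial_mul_exp (abs_nonneg t) i
          gcongr
    _ = (i.factorial : ℝ) * rexp (|t| + -t^2) := by rw [Real.exp_add]; ring
    _ ≤ (i.factorial : ℝ) * rexp (1/2 + -(1/2)*t^2) := by
          have hfac : (0:ℝ) ≤ (i.factorial : ℝ) := by positivity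
          refine mul_le_mul_of_nonneg_left (Real.exp_le_exp.mpr ?_) hfac
          nlinarith [sq_nonneg (|t| - 1), _root_.sq_abs t]
    _ = ((i.factorial : ℝ) * Real.exp (1/2)) * rexp (-(1/2)*t^2) := by
          rw [Real.exp_add]; ring

lemma integrable_polyGauss (p : Polynomial ℝ) :
    Integrable fun t : ℝ => eval t p * rexp (-t^2) := by
  have : (fun t : ℝ => eval t p * rexp (-t^2))
      = fun t => ∑ i ∈ range (p.natDegree + 1), p.coeff i * (t^i * rexp (-t^2)) := by
    funext t
    rw [eval_eq_sum_range, Finset.sum_mul]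
    simp [mul_assoc]
  rw [this]
  exact integrable_finset_sum _ fun i _ => (integrable_pow_gauss i).const_mul _

/-- The canonical complex integrand. -/
noncomputable def Kc (s : ℝ) (p : Polynomial ℝ) : ℝ → ℂ := fun t =>
  ((eval t p * rexp (-t^2) : ℝ) : ℂ) * Complex.exp ((s * t : ℝ) * Complex.I)

lemma continuous_Kc (s : ℝ) (p : Polynomial ℝ) : Continuous (Kc s p) := by
  apply Continuous.mul
  · exact Complex.continuous_ofReal.comp (p.continuous_aeval.mul
      (Real.continuous_exp.comp (continuous_pow 2).neg))
  · exact Complex.continuous_exp.comp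
      ((Complex.continuous_ofReal.comp (continuous_const.mul continuous_id)).mul continuous_const)

lemma norm_Kc (s : ℝ) (p : Polynomial ℝ) (t : ℝ) :
    ‖Kc s p t‖ = |eval t p * rexp (-t^2)| := by
  rw [Kc, norm_mul, Complex.norm_real, Complex.norm_exp_ofReal_mul_I, mul_one, Real.norm_eq_abs]

lemma integrable_Kc (s : ℝ) (p : Polynomial ℝ) : Integrable (Kc s p) := by
  apply Integrable.mono' (integrable_polyGauss p).abs (continuous_Kc s p).aestronglyMeasurable
  filter_upwards with t
  rw [norm_Kc]

noncomputable def Jc (s : ℝ) (p : Polynomial ℝ) : ℂ := ∫ t : ℝ, Kc s p t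

lemma Jc_C_mul (s : ℝ) (a : ℝ) (p : Polynomial ℝ) : Jc s (C a * p) = a * Jc s p := by
  rw [Jc, Jc, ← integral_const_mul]
  congr 1; funext t
  simp only [Kc, eval_mul, eval_C]
  push_cast
  ring

lemma Jc_zero (s : ℝ) : Jc s 0 = 0 := by
  simp [Jc, Kc]

lemma Jc_one (s : ℝ) : Jc s 1 = ((Real.sqrt π * rexp (-s^2/4) : ℝ) : ℂ) := by
  have h := fourierIntegral_gaussian (b := (1:ℂ)) (by norm_num) (s : ℂ)
  have hL : (∫ x : ℝ, Complex.exp (Complex.I * s * x) * Complex.exp (-1 * x^2)) = Jc s 1 := by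
    rw [Jc]
    congr 1; funext t
    rw [Kc, eval_one, one_mul, Complex.ofReal_exp, ← Complex.exp_add, ← Complex.exp_add]
    congr 1
    push_cast
    ring
  rw [hL] at h
  rw [h]
  have h2 : ((π : ℂ) / 1) ^ (1/2 : ℂ) = ((Real.sqrt π : ℝ) : ℂ) := by
    rw [div_one, Real.sqrt_eq_rpow, Complex.ofReal_cpow Real.pi_pos.le]
    norm_num
  rw [h2]
  rw [Complex.ofReal_mul]
  congr 1
  rw [Complex.ofReal_exp]
  congr 1
  push_cast
  ring

lemma Jc_step (s : ℝ) (p r : Polynomial ℝ) :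
    Jc s (p * (derivative r - C 2 * X * r)) =
      -(Jc s (derivative p * r)) - Complex.I * s * Jc s (p * r) := by
  set u : ℝ → ℂ := fun t => ((eval t p : ℝ) : ℂ) * Complex.exp ((s * t : ℝ) * Complex.I) with hu_def
  set u' : ℝ → ℂ := fun t => ((eval t (derivative p) : ℝ) : ℂ) * Complex.exp ((s * t : ℝ) * Complex.I)
      + (Complex.I * s) * (((eval t p : ℝ) : ℂ) * Complex.exp ((s * t : ℝ) * Complex.I)) with hu'_def
  set v : ℝ → ℂ := fun t => ((eval t r * rexp (-t^2) : ℝ) : ℂ) with hv_def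
  set v' : ℝ → ℂ := fun t =>
    ((eval t (derivative r - C 2 * X * r) * rexp (-t^2) : ℝ) : ℂ) with hv'_def
  have hu : ∀ t : ℝ, HasDerivAt u (u' t) t := by
    intro t
    have h1 : HasDerivAt (fun t : ℝ => ((eval t p : ℝ) : ℂ))
        ((eval t (derivative p) : ℝ) : ℂ) t := (p.hasDerivAt t).ofReal_comp
    have hin : HasDerivAt (fun t : ℝ => ((s * t : ℝ) : ℂ) * Complex.I) ((s : ℂ) * Complex.I) t := by
      have : HasDerivAt (fun t : ℝ => s * t) s t := by
        simpa using (hasDerivAt_id t).const_mul s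
      exact this.ofReal_comp.mul_const Complex.I
    have h2 := hin.cexp
    have := h1.fun_mul h2
    refine this.congr_deriv ?_
    simp only [hu'_def]
    try ring
  have hv : ∀ t : ℝ, HasDerivAt v (v' t) t := fun t => (hasDerivAt_polyGauss r t).ofReal_comp
  have huv' : (fun t => u t * v' t) = Kc s (p * (derivative r - C 2 * X * r)) := by
    funext t; simp only [hu_def, hv'_def, Kc, eval_mul]; push_cast; ring
  have hu'v : (fun t => u' t * v t)
      = fun t => Kc s (derivative p * r) t + (Complex.I * s) * Kc s (p * r) t := by
    funext t; simp only [hu'_def, hv_def, Kc, eval_mul]; push_cast; ring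
  have huv : (fun t => u t * v t) = Kc s (p * r) := by
    funext t; simp only [hu_def, hv_def, Kc, eval_mul]; push_cast; ring
  have hIBP := integral_mul_deriv_eq_deriv_mul_of_integrable (fun t _ => hu t) (fun t _ => hv t)
    (by rw [show u * v' = fun t => u t * v' t from rfl, huv']; exact integrable_Kc _ _)
    (by rw [show u' * v = fun t => u' t * v t from rfl, hu'v]
        exact (integrable_Kc _ _).add ((integrable_Kc _ _).const_mul _))
    (by rw [show u * v = fun t => u t * v t from rfl, huv]; exact integrable_Kc _ _)
  have e1 : (∫ t : ℝ, u t * v' t) = Jc s (p * (derivative r - C 2 * X * r)) := by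
    rw [Jc, huv']
  have e2 : (∫ t : ℝ, u' t * v t)
      = Jc s (derivative p * r) + Complex.I * s * Jc s (p * r) := by
    rw [show (fun t : ℝ => u' t * v t) = _ from hu'v]
    rw [integral_add (integrable_Kc _ _) ((integrable_Kc _ _).const_mul _)]
    rw [integral_const_mul]
    rfl
  rw [e1, e2] at hIBP
  rw [hIBP]
  ring

lemma Jc_Hp (s : ℝ) (m : ℕ) :
    Jc s (Hp m) = (-(Complex.I * s))^m * ((Real.sqrt π * rexp (-s^2/4) : ℝ) : ℂ) := by
  induction m with
  | zero => simpa [Hp] using Jc_one s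
  | succ m ih =>
      have h := Jc_step s 1 (Hp m)
      rw [one_mul, one_mul, derivative_one, zero_mul, Jc_zero, neg_zero, zero_sub] at h
      rw [Hp_succ, h, ih]
      ring

lemma Jc_parts (s : ℝ) : ∀ (b : ℕ) (p : Polynomial ℝ),
    Jc s (p * Hp b) = (-1:ℂ)^b * ∑ i ∈ range (b+1),
      (b.choose i : ℂ) * (Complex.I * s)^(b-i) * Jc s (derivative^[i] p) := by
  intro b
  induction b with
  | zero =>
      intro p
      simp [Hp]
  | succ b ih =>
      intro p
      rw [Hp_succ, Jc_step s p (Hp b), ih (derivative p), ih p]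
      have hiter : ∀ i : ℕ, derivative^[i] (derivative p) = derivative^[i+1] p := by
        intro i; rw [Function.iterate_succ_apply]
      simp only [hiter]
      -- key : (I*s) * S0 = S2 + (I*s)^(b+1) * Jc s p
      have key : (Complex.I * s) * ∑ i ∈ range (b+1),
            (b.choose i : ℂ) * (Complex.I * s)^(b-i) * Jc s (derivative^[i] p)
          = (∑ i ∈ range (b+1),
              (b.choose (i+1) : ℂ) * (Complex.I * s)^(b-i) * Jc s (derivative^[i+1] p))
            + (Complex.I * s)^(b+1) * Jc s p := by
        rw [Finset.mul_sum]
        have e : ∀ i ∈ range (b+1), (Complex.I * s) *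
              ((b.choose i : ℂ) * (Complex.I * s)^(b-i) * Jc s (derivative^[i] p))
            = (b.choose i : ℂ) * (Complex.I * s)^(b+1-i) * Jc s (derivative^[i] p) := by
          intro i hi
          rw [Finset.mem_range] at hi
          have : b + 1 - i = (b - i) + 1 := by omega
          rw [this, pow_succ]
          ring
        rw [Finset.sum_congr rfl e]
        rw [Finset.sum_range_succ'
          (fun i => (b.choose i : ℂ) * (Complex.I * s)^(b+1-i) * Jc s (derivative^[i] p)) b]
        have e2 : ∀ i, (b.choose (i+1) : ℂ) * (Complex.I * s)^(b+1-(i+1)) * Jc s (derivative^[i+1] p)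
            = (b.choose (i+1) : ℂ) * (Complex.I * s)^(b-i) * Jc s (derivative^[i+1] p) := by
          intro i; rw [Nat.succ_sub_succ]
        simp only [e2, Nat.choose_zero_right, Nat.cast_one, one_mul, Nat.sub_zero,
          Function.iterate_zero, id_eq]
        rw [Finset.sum_range_succ
          (fun i => (b.choose (i+1) : ℂ) * (Complex.I * s)^(b-i) * Jc s (derivative^[i+1] p)) b]
        rw [Nat.choose_succ_self]
        push_cast
        ring
      rw [Finset.sum_range_succ'
        (fun i => ((b+1).choose i : ℂ) * (Complex.I * s)^(b+1-i) * Jc s (derivative^[i] p)) (b+1)]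
      have e3 : ∀ i, (((b+1).choose (i+1) : ℕ) : ℂ) * (Complex.I * s)^(b+1-(i+1)) * Jc s (derivative^[i+1] p)
          = ((b.choose i : ℂ) + (b.choose (i+1) : ℂ)) * (Complex.I * s)^(b-i) * Jc s (derivative^[i+1] p) := by
        intro i
        rw [Nat.choose_succ_succ, Nat.succ_sub_succ]
        push_cast
        ring
      simp only [e3, add_mul]
      rw [Finset.sum_add_distrib]
      simp only [Nat.choose_zero_right, Nat.cast_one, one_mul, Nat.sub_zero,
        Function.iterate_zero, id_eq]
      linear_combination ((-1:ℂ)^(b+1)) * key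

end PartB

section PartC
open MeasureTheory Real Polynomial Complex Filter Finset

noncomputable def cR (q k : ℕ) : ℝ :=
  (-1:ℝ)^k * 2^(q-k) * (q.choose k) * (q.descFactorial (q-k))

noncomputable def Gfun (q : ℕ) (σ : ℝ) : ℝ :=
  Real.sqrt π * rexp (-σ^2/4) * ∑ k ∈ range (q+1), cR q k * σ^(2*k)

lemma Jc_sq (s : ℝ) (q : ℕ) : Jc s (Hp q * Hp q) = ((Gfun q s : ℝ) : ℂ) := by
  have hIs : ∀ n : ℕ, (Complex.I * (s:ℂ))^n * (-(Complex.I * s))^n = ((s:ℂ)^2)^n := by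
    intro n
    rw [← mul_pow]
    congr 1
    rw [show Complex.I * (s:ℂ) * -(Complex.I * s) = -(Complex.I^2 * s^2) by ring, Complex.I_sq]
    ring
  set G0 : ℝ := Real.sqrt π * rexp (-s^2/4) with hG0
  have e1 : ∀ i ∈ range (q+1),
      (q.choose i : ℂ) * (Complex.I * s)^(q-i) * Jc s (derivative^[i] (Hp q))
      = ((((-2:ℝ)^i * (q.choose i) * (q.descFactorial i) * s^(2*(q-i))) : ℝ) : ℂ)
        * ((G0 : ℝ) : ℂ) := by
    intro i hi
    rw [Hp_iter_derivative, Jc_C_mul, Jc_Hp, ← hG0]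
    rw [pow_mul]
    push_cast
    linear_combination ((q.choose i : ℂ) * ((-2:ℂ))^i * (q.descFactorial i : ℂ) * ((G0:ℝ):ℂ)) *
      hIs (q - i)
  rw [Jc_parts s q (Hp q), Finset.sum_congr rfl e1]
  simp only [← Complex.ofReal_mul]
  rw [← Complex.ofReal_sum]
  have hq : ((-1:ℂ))^q = (((-1:ℝ)^q : ℝ) : ℂ) := by push_cast; ring
  rw [hq, ← Complex.ofReal_mul]
  congr 1
  rw [Gfun, ← hG0, Finset.mul_sum]
  have e2 : (∑ k ∈ range (q+1), (-1:ℝ)^q *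
        ((-2:ℝ)^(q+1-1-k) * (q.choose (q+1-1-k)) *
          (q.descFactorial (q+1-1-k)) * s^(2*(q-(q+1-1-k))) * G0))
      = ∑ i ∈ range (q+1), (-1:ℝ)^q *
        ((-2:ℝ)^i * (q.choose i) * (q.descFactorial i) * s^(2*(q-i)) * G0) :=
    Finset.sum_range_reflect
      (fun i => (-1:ℝ)^q *
        ((-2:ℝ)^i * (q.choose i) * (q.descFactorial i) * s^(2*(q-i)) * G0)) (q+1)
  rw [← e2]
  rw [Finset.mul_sum]
  apply Finset.sum_congr rfl
  intro k hk
  rw [Finset.mem_range] at hk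
  have hkq : k ≤ q := by omega
  have h1 : q + 1 - 1 - k = q - k := by omega
  have h2 : q - (q - k) = k := by omega
  have h3 : q.choose (q - k) = q.choose k := Nat.choose_symm hkq
  have h4 : (-1:ℝ)^q * (-1:ℝ)^(q-k) = (-1:ℝ)^k := by
    rw [← pow_add, show q + (q - k) = 2*(q-k) + k by omega, pow_add, pow_mul, neg_one_sq, one_pow,
      one_mul]
  have h5 : ((-2:ℝ))^(q-k) = (-1:ℝ)^(q-k) * 2^(q-k) := by
    rw [← neg_one_mul (2:ℝ), mul_pow]
  rw [h1, h2, h3, cR, h5]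
  calc (-1:ℝ)^q * ((-1:ℝ)^(q-k) * 2^(q-k) * (q.choose k) *
        (q.descFactorial (q-k)) * s^(2*k) * G0)
      = ((-1:ℝ)^q * (-1:ℝ)^(q-k)) * (2^(q-k) * (q.choose k) *
        (q.descFactorial (q-k)) * s^(2*k) * G0) := by ring
  _ = _ := by rw [h4]; ring

lemma integrable_F (q : ℕ) (σ : ℝ) :
    Integrable fun t : ℝ => (eval t (Hp q))^2 * rexp (-t^2) * Real.cos (σ*t) := by
  apply Integrable.mono' (integrable_polyGauss ((Hp q) * (Hp q))).abs
  · apply Continuous.aestronglyMeasurable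
    exact (((Hp q).continuous_aeval.pow 2).mul
      (Real.continuous_exp.comp (continuous_pow 2).neg)).mul
      (Real.continuous_cos.comp (continuous_const.mul continuous_id))
  · filter_upwards with t
    rw [Real.norm_eq_abs, abs_mul, abs_mul, _root_.abs_pow, Real.abs_exp, eval_mul]
    calc |eval t (Hp q)|^2 * rexp (-t^2) * |Real.cos (σ*t)|
        ≤ |eval t (Hp q)|^2 * rexp (-t^2) * 1 := by
          gcongr
          exact Real.abs_cos_le_one _
    _ ≤ |eval t (Hp q) * eval t (Hp q) * rexp (-t^2)| := by
          rw [mul_one, abs_mul, abs_mul, Real.abs_exp]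
          exact le_of_eq (by ring)

lemma cos_integral (q : ℕ) (s : ℝ) :
    (∫ t : ℝ, (eval t (Hp q))^2 * rexp (-t^2) * Real.cos (s*t)) = Gfun q s := by
  have h2 : ∀ t : ℝ, (Kc s (Hp q * Hp q) t).re
      = (eval t (Hp q))^2 * rexp (-t^2) * Real.cos (s*t) := by
    intro t
    rw [Kc, Complex.re_ofReal_mul, Complex.exp_ofReal_mul_I_re, eval_mul]
    ring
  have h1 := integral_re (integrable_Kc s (Hp q * Hp q))
  simp only [RCLike.re_to_complex] at h1
  calc (∫ t : ℝ, (eval t (Hp q))^2 * rexp (-t^2) * Real.cos (s*t))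
      = ∫ t : ℝ, (Kc s (Hp q * Hp q) t).re := by
        congr 1; funext t; rw [h2]
  _ = (Jc s (Hp q * Hp q)).re := h1
  _ = Gfun q s := by rw [Jc_sq]; exact Complex.ofReal_re _

lemma hasDeriv_cosInt (q : ℕ) (s : ℝ) :
    HasDerivAt (fun σ : ℝ => ∫ t : ℝ, (eval t (Hp q))^2 * rexp (-t^2) * Real.cos (σ*t))
      (∫ t : ℝ, (eval t (Hp q))^2 * rexp (-t^2) * (-Real.sin (s*t) * t)) s := by
  have key := hasDerivAt_integral_of_dominated_loc_of_deriv_le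
    (F := fun (σ : ℝ) (t : ℝ) => (eval t (Hp q))^2 * rexp (-t^2) * Real.cos (σ*t))
    (F' := fun (σ : ℝ) (t : ℝ) => (eval t (Hp q))^2 * rexp (-t^2) * (-Real.sin (σ*t) * t))
    (x₀ := s) (s := Metric.ball s 1) (bound := fun t => |eval t ((Hp q) * (Hp q) * X) * rexp (-t^2)|)
    (Metric.ball_mem_nhds s one_pos)
    (Filter.Eventually.of_forall fun σ => (integrable_F q σ).aestronglyMeasurable)
    (integrable_F q s)
    ?_ ?_ ((integrable_polyGauss ((Hp q) * (Hp q) * X)).abs) ?_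
  · exact key.2
  · apply Continuous.aestronglyMeasurable
    exact (((Hp q).continuous_aeval.pow 2).mul
      (Real.continuous_exp.comp (continuous_pow 2).neg)).mul
      (((Real.continuous_sin.comp (continuous_const.mul continuous_id)).neg).mul continuous_id)
  · filter_upwards with t
    intro σ _
    rw [Real.norm_eq_abs, abs_mul, abs_mul, _root_.abs_pow, Real.abs_exp, eval_mul, eval_mul,
      eval_X]
    calc |eval t (Hp q)|^2 * rexp (-t^2) * |(-Real.sin (σ*t) * t)|
        ≤ |eval t (Hp q)|^2 * rexp (-t^2) * (1 * |t|) := by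
          gcongr
          rw [abs_mul, abs_neg]
          gcongr
          exact Real.abs_sin_le_one _
    _ ≤ |eval t (Hp q) * eval t (Hp q) * t * rexp (-t^2)| := by
          rw [abs_mul, abs_mul, abs_mul, Real.abs_exp]
          exact le_of_eq (by ring)
  · filter_upwards with t
    intro σ _
    have hcos : HasDerivAt (fun σ : ℝ => Real.cos (σ*t)) (-Real.sin (σ*t) * t) σ := by
      have : HasDerivAt (fun σ : ℝ => σ*t) t σ := hasDerivAt_mul_const t
      exact this.cos
    simpa using hcos.const_mul ((eval t (Hp q))^2 * rexp (-t^2))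

lemma sin_integral (q : ℕ) (s : ℝ) :
    (∫ t : ℝ, Real.sin (s*t) * t * ((eval t (Hp q))^2 * rexp (-t^2)))
      = Real.sqrt π * rexp (-s^2/4) *
          (s/2 * (∑ k ∈ range (q+1), cR q k * s^(2*k))
           - ∑ k ∈ range (q+1), cR q k * ((2*k) * s^(2*k-1))) := by
  have hE : HasDerivAt (fun σ : ℝ => rexp (-σ^2/4)) (rexp (-s^2/4) * (-(2*s)/4)) s := by
    have h0 : HasDerivAt (fun σ : ℝ => -σ^2/4) (-(2*s)/4) s := by
      have := (hasDerivAt_pow 2 s).fun_neg.div_const 4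
      refine this.congr_deriv ?_
      push_cast
      ring
    exact h0.exp
  have hS : HasDerivAt (fun σ : ℝ => ∑ k ∈ range (q+1), cR q k * σ^(2*k))
      (∑ k ∈ range (q+1), cR q k * ((2*k) * s^(2*k-1))) s := by
    apply HasDerivAt.fun_sum
    intro k _
    have := (hasDerivAt_pow (2*k) s).const_mul (cR q k)
    simpa using this
  have hG : HasDerivAt (Gfun q)
      (Real.sqrt π * (rexp (-s^2/4) * (-(2*s)/4)) *
          (∑ k ∈ range (q+1), cR q k * s^(2*k))
        + Real.sqrt π * rexp (-s^2/4) *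
          (∑ k ∈ range (q+1), cR q k * ((2*k) * s^(2*k-1)))) s := by
    have h := ((hE.const_mul (Real.sqrt π)).fun_mul hS)
    refine h.congr_deriv ?_
    all_goals try ring
    all_goals funext σ; rw [Gfun]
  have hFG : (fun σ : ℝ => ∫ t : ℝ, (eval t (Hp q))^2 * rexp (-t^2) * Real.cos (σ*t))
      = Gfun q := funext (cos_integral q)
  have hD := hasDeriv_cosInt q s
  rw [hFG] at hD
  have huniq := hD.unique hG
  have hflip : (fun t : ℝ => Real.sin (s*t) * t * ((eval t (Hp q))^2 * rexp (-t^2)))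
      = fun t : ℝ => -((eval t (Hp q))^2 * rexp (-t^2) * (-Real.sin (s*t) * t)) := by
    funext t; ring
  rw [hflip, integral_neg, huniq]
  ring

end PartC

section PartD
open MeasureTheory Real Polynomial Complex Filter Finset

lemma hasDerivAt_polyExpNeg (p : Polynomial ℝ) (x : ℝ) :
    HasDerivAt (fun x : ℝ => eval x p * rexp (-x)) (eval x (derivative p - p) * rexp (-x)) x := by
  have h1 : HasDerivAt (fun x : ℝ => rexp (-x)) (-rexp (-x)) x := by
    simpa using (hasDerivAt_neg x).exp
  have := (p.hasDerivAt x).fun_mul h1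
  refine this.congr_deriv ?_
  simp only [eval_sub]
  ring

lemma iteratedDeriv_polyExpNeg (m : ℕ) : ∀ p : Polynomial ℝ,
    iteratedDeriv m (fun x : ℝ => eval x p * rexp (-x))
      = fun x => eval x ((fun r : Polynomial ℝ => derivative r - r)^[m] p) * rexp (-x) := by
  induction m with
  | zero => intro p; simp
  | succ m ih =>
      intro p
      rw [iteratedDeriv_succ']
      have hd : (deriv fun x : ℝ => eval x p * rexp (-x))
          = fun x => eval x (derivative p - p) * rexp (-x) :=
        funext fun x => (hasDerivAt_polyExpNeg p x).deriv
      rw [hd, ih (derivative p - p), Function.iterate_succ_apply]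

lemma Lit_apply (m : ℕ) : ∀ p : Polynomial ℝ,
    (fun r : Polynomial ℝ => derivative r - r)^[m] p
      = ∑ i ∈ range (m+1), C ((-1:ℝ)^(m-i) * (m.choose i)) * derivative^[i] p := by
  induction m with
  | zero => intro p; simp
  | succ m ih =>
      intro p
      rw [Function.iterate_succ_apply, ih (derivative p - p)]
      have hsub : ∀ i : ℕ, derivative^[i] (derivative p - p)
          = derivative^[i+1] p - derivative^[i] p := by
        intro i
        rw [iterate_derivative_sub, Function.iterate_succ_apply]
      simp only [hsub]
      apply Polynomial.funext
      intro ξ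
      simp only [eval_finset_sum, eval_mul, eval_C, eval_sub]
      -- A i := eval ξ (derivative^[i] p)
      set A : ℕ → ℝ := fun i => eval ξ (derivative^[i] p) with hA
      have key : (∑ i ∈ range (m+1), (-1:ℝ)^(m-i) * (m.choose i) * A i)
          + (∑ i ∈ range (m+1), (-1:ℝ)^(m-i) * (m.choose (i+1)) * A (i+1))
          = (-1:ℝ)^m * A 0 := by
        rw [Finset.sum_range_succ' (fun i => (-1:ℝ)^(m-i) * (m.choose i) * A i) m]
        rw [Finset.sum_range_succ (fun i => (-1:ℝ)^(m-i) * (m.choose (i+1)) * A (i+1)) m]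
        rw [Nat.choose_succ_self]
        have e : ∀ i ∈ range m, (-1:ℝ)^(m-(i+1)) * (m.choose (i+1)) * A (i+1)
            = -((-1:ℝ)^(m-i) * (m.choose (i+1)) * A (i+1)) := by
          intro i hi
          rw [Finset.mem_range] at hi
          rw [show m - i = (m - (i+1)) + 1 by omega, pow_succ]
          ring
        rw [Finset.sum_congr rfl e, Finset.sum_neg_distrib]
        simp
        try ring
      have rhs : (∑ i ∈ range (m+2), (-1:ℝ)^(m+1-i) * ((m+1).choose i) * A i)
          = (∑ i ∈ range (m+1), (-1:ℝ)^(m-i) * (m.choose i) * A (i+1))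
            + (∑ i ∈ range (m+1), (-1:ℝ)^(m-i) * (m.choose (i+1)) * A (i+1))
            + (-1:ℝ)^(m+1) * A 0 := by
        rw [Finset.sum_range_succ'
          (fun i => (-1:ℝ)^(m+1-i) * ((m+1).choose i) * A i) (m+1)]
        have e : ∀ i, (-1:ℝ)^(m+1-(i+1)) * ((m+1).choose (i+1)) * A (i+1)
            = (-1:ℝ)^(m-i) * (m.choose i) * A (i+1)
              + (-1:ℝ)^(m-i) * (m.choose (i+1)) * A (i+1) := by
          intro i
          rw [Nat.succ_sub_succ, Nat.choose_succ_succ]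
          push_cast
          ring
        rw [Finset.sum_congr rfl (fun i _ => e i), Finset.sum_add_distrib]
        simp
        try ring
      rw [rhs]
      have lhs : (∑ i ∈ range (m+1), (-1:ℝ)^(m-i) * (m.choose i) * (A (i+1) - A i))
          = (∑ i ∈ range (m+1), (-1:ℝ)^(m-i) * (m.choose i) * A (i+1))
            - (∑ i ∈ range (m+1), (-1:ℝ)^(m-i) * (m.choose i) * A i) := by
        rw [← Finset.sum_sub_distrib]
        apply Finset.sum_congr rfl
        intro i _
        ring
      rw [lhs]
      linear_combination -key

lemma laguQ_eq (q : ℕ) (x : ℝ) :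
    laguQ q x = ∑ k ∈ range (q+1), (-1:ℝ)^k * (q.choose k) / k.factorial * x^k := by
  rw [laguQ]
  have h0 : (fun x : ℝ => x ^ q * Real.exp (-x))
      = fun x => eval x (X^q : Polynomial ℝ) * rexp (-x) := by
    funext x; simp
  rw [h0, iteratedDeriv_polyExpNeg, Lit_apply]
  simp only [eval_finset_sum, eval_mul, eval_C, iterate_derivative_X_pow_eq_C_mul, eval_pow,
    eval_X]
  rw [Finset.sum_mul, Finset.mul_sum]
  rw [← Finset.sum_range_reflect (fun k => (-1:ℝ)^k * (q.choose k) / k.factorial * x^k) (q+1)]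
  apply Finset.sum_congr rfl
  intro i hi
  rw [Finset.mem_range] at hi
  have hiq : i ≤ q := by omega
  have h1 : q + 1 - 1 - i = q - i := by omega
  have hF0 : (((q-i).factorial : ℕ) : ℝ) ≠ 0 := by
    exact_mod_cast (q-i).factorial_pos.ne'
  have hq0 : ((q.factorial : ℕ) : ℝ) ≠ 0 := by exact_mod_cast q.factorial_pos.ne'
  have hnat : (q-i).factorial * q.descFactorial i = q.factorial :=
    Nat.factorial_mul_descFactorial hiq
  have hcast : (((q-i).factorial : ℕ) : ℝ) * ((q.descFactorial i : ℕ) : ℝ)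
      = ((q.factorial : ℕ) : ℝ) := by exact_mod_cast congrArg (Nat.cast : ℕ → ℝ) hnat
  have hDF : ((q.descFactorial i : ℕ) : ℝ)
      = ((q.factorial : ℕ) : ℝ) / (((q-i).factorial : ℕ) : ℝ) := by
    rw [eq_div_iff hF0, mul_comm]
    exact hcast
  rw [h1, Nat.choose_symm hiq, hDF, Real.exp_neg]
  field_simp

end PartD

section PartE
open MeasureTheory Real Polynomial Complex Filter Finset

lemma laguQ_deriv (q : ℕ) (x : ℝ) :
    deriv (laguQ q) x
      = ∑ k ∈ range (q+1), (-1:ℝ)^k * (q.choose k) / k.factorial * ((k : ℝ) * x^(k-1)) := by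
  have hfun : laguQ q
      = fun x => ∑ k ∈ range (q+1), (-1:ℝ)^k * (q.choose k) / k.factorial * x^k :=
    funext (laguQ_eq q)
  rw [hfun]
  refine (HasDerivAt.fun_sum ?_).deriv
  intro k _
  exact (hasDerivAt_pow k x).const_mul _

lemma perterm (q : ℕ) (s : ℝ) : ∀ k ∈ range (q+1),
    (((q.factorial:ℝ) * 2^q)⁻¹) * (s/2 * (cR q k * s^(2*k)) - cR q k * ((2*k) * s^(2*k-1)))
    = s/2 * ((-1:ℝ)^k * (q.choose k) / k.factorial * (s^2/2)^k
        - 2 * ((-1:ℝ)^k * (q.choose k) / k.factorial * ((k:ℝ) * (s^2/2)^(k-1)))) := by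
  intro k hk
  rw [Finset.mem_range] at hk
  have hkq : k ≤ q := by omega
  have hq0 : ((q.factorial : ℕ) : ℝ) ≠ 0 := by exact_mod_cast q.factorial_pos.ne'
  have hk0 : ((k.factorial : ℕ) : ℝ) ≠ 0 := by exact_mod_cast k.factorial_pos.ne'
  have hnat : k.factorial * q.descFactorial (q - k) = q.factorial := by
    have h := Nat.factorial_mul_descFactorial (show q - k ≤ q from Nat.sub_le q k)
    rwa [show q - (q - k) = k from by omega] at h
  have hdesc : ((q.descFactorial (q-k) : ℕ) : ℝ)
      = ((q.factorial : ℕ) : ℝ) / ((k.factorial : ℕ) : ℝ) := by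
    rw [eq_div_iff hk0, mul_comm]
    exact_mod_cast congrArg (Nat.cast : ℕ → ℝ) hnat
  have h2p : (2:ℝ)^(q-k) = 2^q / 2^k := by
    rw [eq_div_iff (by positivity : (2:ℝ)^k ≠ 0), ← pow_add]
    congr 1
    omega
  rw [cR, hdesc, h2p]
  rcases k with _ | k0
  · norm_num
    field_simp
  · have e1 : 2*(k0+1) = 2*k0+2 := by omega
    have e2 : 2*(k0+1)-1 = 2*k0+1 := by omega
    have e3 : (k0+1)-1 = k0 := by omega
    rw [e2, e1, e3]
    rw [div_pow, div_pow]
    field_simp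
    ring

lemma oscI_eq_oscP_mul_exp_aux (j : ℕ) (hj : 1 ≤ j) (s : ℝ) :
    (∫ t : ℝ, Real.sin (s * t) * t * (oscFun j 1 t) ^ 2) =
      (s / 2 * (laguQ (j - 1) (s ^ 2 / 2) - 2 * deriv (laguQ (j - 1)) (s ^ 2 / 2))) *
        Real.exp (-s ^ 2 / 4) := by
  set q := j - 1 with hqdef
  have hsπ : (0:ℝ) < Real.sqrt π := Real.sqrt_pos.mpr Real.pi_pos
  have A0 : (0:ℝ) < ((q.factorial : ℕ) : ℝ) * 2^q * Real.sqrt π := by positivity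
  have hosc : ∀ t : ℝ, Real.sin (s*t) * t * (oscFun j 1 t)^2
      = (((q.factorial : ℕ) : ℝ) * 2^q * Real.sqrt π)⁻¹ *
          (Real.sin (s*t) * t * ((eval t (Hp q))^2 * rexp (-t^2))) := by
    intro t
    rw [oscFun, hermQ_eq_Hp]
    simp only [← hqdef, Real.one_rpow, Real.sqrt_one, one_mul]
    have hE2 : rexp (-(t^2)/2) * rexp (-(t^2)/2) = rexp (-t^2) := by
      rw [← Real.exp_add]; congr 1; ring
    have hA : Real.sqrt (((q.factorial : ℕ) : ℝ) * 2^q * Real.sqrt π) *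
        Real.sqrt (((q.factorial : ℕ) : ℝ) * 2^q * Real.sqrt π)
        = ((q.factorial : ℕ) : ℝ) * 2^q * Real.sqrt π := Real.mul_self_sqrt A0.le
    have key : ((1:ℝ) / Real.sqrt (((q.factorial : ℕ) : ℝ) * 2^q * Real.sqrt π) *
          eval t (Hp q) * rexp (-(t^2)/2))^2
        = (((q.factorial : ℕ) : ℝ) * 2^q * Real.sqrt π)⁻¹ *
          ((eval t (Hp q))^2 * rexp (-t^2)) := by
      have h : ((1:ℝ) / Real.sqrt (((q.factorial : ℕ) : ℝ) * 2^q * Real.sqrt π) *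
            eval t (Hp q) * rexp (-(t^2)/2))^2
          = (1 / (Real.sqrt (((q.factorial : ℕ) : ℝ) * 2^q * Real.sqrt π) *
              Real.sqrt (((q.factorial : ℕ) : ℝ) * 2^q * Real.sqrt π))) *
            ((eval t (Hp q))^2 * (rexp (-(t^2)/2) * rexp (-(t^2)/2))) := by ring
      rw [h, hA, hE2, one_div]
    rw [key]
    ring
  rw [show (fun t : ℝ => Real.sin (s * t) * t * (oscFun j 1 t) ^ 2)
      = fun t : ℝ => (((q.factorial : ℕ) : ℝ) * 2^q * Real.sqrt π)⁻¹ *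
          (Real.sin (s*t) * t * ((eval t (Hp q))^2 * rexp (-t^2))) from funext hosc]
  rw [integral_const_mul, sin_integral q s]
  rw [laguQ_eq, laguQ_deriv]
  have hAinv : (((q.factorial : ℕ) : ℝ) * 2^q * Real.sqrt π)⁻¹ * Real.sqrt π
      = (((q.factorial : ℕ) : ℝ) * 2^q)⁻¹ := by
    field_simp
  have hsum' : (((q.factorial : ℕ) : ℝ) * 2^q)⁻¹ *
        (s/2 * (∑ k ∈ range (q+1), cR q k * s^(2*k))
          - ∑ k ∈ range (q+1), cR q k * ((2*k) * s^(2*k-1)))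
      = s/2 * ((∑ k ∈ range (q+1), (-1:ℝ)^k * (q.choose k) / k.factorial * (s^2/2)^k)
          - 2 * ∑ k ∈ range (q+1),
              (-1:ℝ)^k * (q.choose k) / k.factorial * ((k:ℝ) * (s^2/2)^(k-1))) := by
    rw [Finset.mul_sum, ← Finset.sum_sub_distrib, Finset.mul_sum, Finset.mul_sum,
      ← Finset.sum_sub_distrib, Finset.mul_sum]
    exact Finset.sum_congr rfl (perterm q s)
  calc (((q.factorial : ℕ) : ℝ) * 2^q * Real.sqrt π)⁻¹ *
        (Real.sqrt π * rexp (-s^2/4) *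
          (s/2 * (∑ k ∈ range (q+1), cR q k * s^(2*k))
           - ∑ k ∈ range (q+1), cR q k * ((2*k) * s^(2*k-1))))
      = ((((q.factorial : ℕ) : ℝ) * 2^q * Real.sqrt π)⁻¹ * Real.sqrt π) *
          (rexp (-s^2/4) *
          (s/2 * (∑ k ∈ range (q+1), cR q k * s^(2*k))
           - ∑ k ∈ range (q+1), cR q k * ((2*k) * s^(2*k-1)))) := by ring
  _ = (((q.factorial : ℕ) : ℝ) * 2^q)⁻¹ * (rexp (-s^2/4) *
          (s/2 * (∑ k ∈ range (q+1), cR q k * s^(2*k))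
           - ∑ k ∈ range (q+1), cR q k * ((2*k) * s^(2*k-1)))) := by rw [hAinv]
  _ = rexp (-s^2/4) * ((((q.factorial : ℕ) : ℝ) * 2^q)⁻¹ *
          (s/2 * (∑ k ∈ range (q+1), cR q k * s^(2*k))
           - ∑ k ∈ range (q+1), cR q k * ((2*k) * s^(2*k-1)))) := by ring
  _ = rexp (-s^2/4) *
        (s/2 * ((∑ k ∈ range (q+1), (-1:ℝ)^k * (q.choose k) / k.factorial * (s^2/2)^k)
          - 2 * ∑ k ∈ range (q+1),
              (-1:ℝ)^k * (q.choose k) / k.factorial * ((k:ℝ) * (s^2/2)^(k-1)))) := by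
      rw [hsum']
  _ = _ := by rw [show -s^2/4 = -(s^2)/4 from by ring]; ring

end PartE


/-- `I_j(s) = ∫ sin(st) t φ_j(t)² dt = 𝒫_j(s) e^{-s²/4}` for the normalized
Hermite functions of `-d²/dt² + t²` (i.e. `B = 1`), cf. (3.22). -/
theorem oscI_eq_oscP_mul_exp (j : ℕ) (hj : 1 ≤ j) (s : ℝ) :
    (∫ t : ℝ, Real.sin (s * t) * t * (oscFun j 1 t) ^ 2) =
      (s / 2 * (laguQ (j - 1) (s ^ 2 / 2) - 2 * deriv (laguQ (j - 1)) (s ^ 2 / 2))) *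
        Real.exp (-s ^ 2 / 4) := by
  exact oscI_eq_oscP_mul_exp_aux j hj s
end

section
/- Let a : ℝ → ℝ be C¹ and 1-periodic with Fourier coefficients α_l, and B > 0, j ≥ 1. Then there exist k₋, k₊ ∈ [0,B) with ∫_ℝ a(t+k₋/B) t φ_j(t;B)² dt < 0 and ∫_ℝ a(t+k₊/B) t φ_j(t;B)² dt > 0 if and only if there exists l ∈ ℕ, l ≥ 1, with α_l I_j(2πl; B) ≠ 0. -/
open MeasureTheory Real Polynomial

private lemma herm_iter_gauss (q : ℕ) :
    ∃ P : Polynomial ℝ,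
      ((fun f : ℝ → ℝ => fun s => deriv f s - s * f s)^[q] (fun s => Real.exp (-(s ^ 2) / 2))) =
        (fun t => P.eval t * Real.exp (-(t ^ 2) / 2)) ∧
      ∀ t, P.eval (-t) = (-1) ^ q * P.eval t := by
  induction q with
  | zero => exact ⟨1, by simp, by simp⟩
  | succ q ih =>
    obtain ⟨P, hP, hpar⟩ := ih
    have hgauss : ∀ t : ℝ, HasDerivAt (fun s : ℝ => Real.exp (-(s ^ 2) / 2))
        (-t * Real.exp (-(t ^ 2) / 2)) t := by
      intro t
      have h1 : HasDerivAt (fun s : ℝ => -(s ^ 2) / 2) (-t) t := by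
        have := ((hasDerivAt_pow 2 t).neg).div_const 2
        norm_num at this
        exact this.congr_deriv (by ring)
      have := h1.exp
      convert this using 1
      ring
    refine ⟨P.derivative - 2 * X * P, ?_, ?_⟩
    · rw [Function.iterate_succ_apply', hP]
      funext t
      have h2 : HasDerivAt (fun t : ℝ => P.eval t * Real.exp (-(t ^ 2) / 2))
          (P.derivative.eval t * Real.exp (-(t ^ 2) / 2) +
            P.eval t * (-t * Real.exp (-(t ^ 2) / 2))) t :=
        (P.hasDerivAt t).mul (hgauss t)
      simp only [h2.deriv, eval_sub, eval_mul, eval_ofNat, eval_X]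
      ring
    · intro t
      have hder : P.derivative.eval (-t) = -((-1 : ℝ) ^ q * P.derivative.eval t) := by
      -- u = fun x => P.eval (-x)
        have hu : HasDerivAt (fun x : ℝ => P.eval (-x)) (P.derivative.eval (-t) * (-1)) t :=
          (P.hasDerivAt (-t)).comp t (hasDerivAt_neg t)
        have hfe : (fun x : ℝ => P.eval (-x)) = fun x : ℝ => (-1 : ℝ) ^ q * P.eval x :=
          funext hpar
        rw [hfe] at hu
        have hv : HasDerivAt (fun x : ℝ => (-1 : ℝ) ^ q * P.eval x)
            ((-1 : ℝ) ^ q * P.derivative.eval t) t := (P.hasDerivAt t).const_mul _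
        have := hu.unique hv
        linarith [this]
      simp only [eval_sub, eval_mul, eval_ofNat, eval_X, hder, hpar t]
      ring

private lemma hermQ_poly (q : ℕ) : ∃ P : Polynomial ℝ,
    (∀ s, hermQ q s = P.eval s) ∧ ∀ t, P.eval (-t) = (-1 : ℝ) ^ q * P.eval t := by
  obtain ⟨P, hP, hpar⟩ := herm_iter_gauss q
  refine ⟨P, fun s => ?_, hpar⟩
  rw [hermQ, hP]
  rw [show Real.exp (s ^ 2 / 2) * (P.eval s * Real.exp (-(s ^ 2) / 2)) =
      P.eval s * (Real.exp (s ^ 2 / 2) * Real.exp (-(s ^ 2) / 2)) by ring, ← Real.exp_add]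
  rw [show s ^ 2 / 2 + -s ^ 2 / 2 = 0 by ring, Real.exp_zero, mul_one]

private lemma oscFun_poly (j : ℕ) (B : ℝ) : ∃ P : Polynomial ℝ,
    (∀ t, oscFun j B t = P.eval (Real.sqrt B * t) * Real.exp (-(B * t ^ 2) / 2)) ∧
    ∀ t, P.eval (-t) = (-1 : ℝ) ^ (j - 1) * P.eval t := by
  obtain ⟨P, hP, hpar⟩ := hermQ_poly (j - 1)
  refine ⟨Polynomial.C (B ^ ((1 : ℝ) / 4) /
      Real.sqrt ((j - 1).factorial * 2 ^ (j - 1) * Real.sqrt π)) * P, fun t => ?_, fun t => ?_⟩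
  · rw [oscFun, hP]; simp only [eval_mul, eval_C]
  · simp only [eval_mul, eval_C, hpar t]; ring

private lemma oscFun_continuous (j : ℕ) (B : ℝ) : Continuous (oscFun j B) := by
  obtain ⟨P, hP, -⟩ := oscFun_poly j B
  have : oscFun j B = fun t => P.eval (Real.sqrt B * t) * Real.exp (-(B * t ^ 2) / 2) :=
    funext hP
  rw [this]; fun_prop

private lemma oscFun_sq_even (j : ℕ) (B t : ℝ) : oscFun j B (-t) ^ 2 = oscFun j B t ^ 2 := by
  obtain ⟨P, hP, hpar⟩ := oscFun_poly j B
  rw [hP, hP, show Real.sqrt B * -t = -(Real.sqrt B * t) by ring, hpar, neg_sq]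
  rw [mul_pow, mul_pow, mul_pow]
  rcases Nat.even_or_odd (j - 1) with h | h
  · rw [h.neg_one_pow]; norm_num
  · rw [h.neg_one_pow]; norm_num

private lemma integrable_poly_gauss (Q : Polynomial ℝ) {b : ℝ} (hb : 0 < b) :
    Integrable (fun t : ℝ => Q.eval t * Real.exp (-b * t ^ 2)) := by
  induction Q using Polynomial.induction_on' with
  | monomial n c =>
    have h1 : Integrable (fun t : ℝ => t ^ n * Real.exp (-b * t ^ 2)) := by
      have : (-1 : ℝ) < (n : ℝ) :=
        lt_of_lt_of_le (by norm_num) (Nat.cast_nonneg n)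
      simpa [Real.rpow_natCast] using integrable_rpow_mul_exp_neg_mul_sq hb this
    simpa [eval_monomial, mul_assoc] using h1.const_mul c
  | add p q hp hq =>
    simpa [eval_add, add_mul, Pi.add_def] using hp.add hq

/-- master integrability: `(bounded continuous g) * (t * φ²)` -/
private lemma integrable_mul_oscFun (j : ℕ) {B : ℝ} (hB : 0 < B) {g : ℝ → ℝ} {M : ℝ}
    (hg : Continuous g) (hgb : ∀ x, |g x| ≤ M) :
    Integrable (fun t : ℝ => g t * (t * oscFun j B t ^ 2)) := by
  obtain ⟨P, hP, -⟩ := oscFun_poly j B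
  have key : ∀ t : ℝ, t * oscFun j B t ^ 2 =
      (X * (P.comp (Polynomial.C (Real.sqrt B) * X)) ^ 2).eval t * Real.exp (-B * t ^ 2) := by
    intro t
    rw [hP]
    have h2 : Real.exp (-(B * t ^ 2) / 2) ^ 2 = Real.exp (-B * t ^ 2) := by
      rw [← Real.exp_nat_mul]; ring_nf
    simp only [eval_mul, eval_pow, eval_X, eval_comp, eval_mul, eval_C, eval_X]
    rw [mul_pow, mul_assoc, h2]
  have hQ := integrable_poly_gauss (X * (P.comp (Polynomial.C (Real.sqrt B) * X)) ^ 2) hB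
  refine Integrable.mono' (hQ.abs.const_mul M) ?_ ?_
  · exact (hg.mul ((continuous_id.mul ((oscFun_continuous j B).pow 2)))).aestronglyMeasurable
  · refine Filter.Eventually.of_forall fun t => ?_
    rw [Real.norm_eq_abs, abs_mul, key]
    have h0 : (0:ℝ) ≤ M := le_trans (abs_nonneg _) (hgb 0)
    calc |g t| * |(X * (P.comp (Polynomial.C (Real.sqrt B) * X)) ^ 2).eval t * Real.exp (-B * t ^ 2)|
        ≤ M * |(X * (P.comp (Polynomial.C (Real.sqrt B) * X)) ^ 2).eval t * Real.exp (-B * t ^ 2)| :=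
          mul_le_mul_of_nonneg_right (hgb t) (abs_nonneg _)
      _ = M * |(X * (P.comp (Polynomial.C (Real.sqrt B) * X)) ^ 2).eval t * Real.exp (-B * t ^ 2)| := rfl

private lemma key_coeff {a : ℝ → ℝ} (ha : Continuous a) (hper : Function.Periodic a 1)
    {M : ℝ} (hM : ∀ x, |a x| ≤ M) {B : ℝ} (hB : 0 < B) (j : ℕ) (l : ℕ) :
    ∫ k in Set.Ioc (0 : ℝ) B, (↑(oscF a j B k) : ℂ) *
        Complex.exp (↑(-(2 * π * l * k / B)) * Complex.I)
      = Complex.I * B * fourCoef a l * (oscI j B (2 * π * l) : ℂ) := by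
  simp only [oscF]
  have hφc := oscFun_continuous j B
  set w : ℝ → ℝ := fun t => t * oscFun j B t ^ 2 with hw_def
  have hwc : Continuous w := continuous_id.mul (hφc.pow 2)
  have hw : Integrable w := by
    simpa using integrable_mul_oscFun j hB (g := fun _ => (1:ℝ)) (M := 1) continuous_const
      (fun x => by norm_num)
  have hwa : Integrable fun t => |w t| := hw.abs
  -- the two-variable integrand
  set f : ℝ → ℝ → ℂ := fun k t =>
    (↑(a (t + k / B) * w t) : ℂ) * Complex.exp (↑(-(2 * π * l * k / B)) * Complex.I) with hf_def
  -- Step 1: rewrite outer integrand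
  have step1 : ∀ k : ℝ, (↑(∫ t : ℝ, a (t + k / B) * t * oscFun j B t ^ 2) : ℂ) *
      Complex.exp (↑(-(2 * π * l * k / B)) * Complex.I) = ∫ t : ℝ, f k t := by
    intro k
    have cast1 : (↑(∫ t : ℝ, a (t + k / B) * t * oscFun j B t ^ 2) : ℂ) =
        ∫ t : ℝ, (↑(a (t + k / B) * t * oscFun j B t ^ 2) : ℂ) := integral_ofReal.symm
    rw [cast1, ← integral_mul_const]
    congr 1
    funext t
    simp only [hf_def, hw_def, mul_assoc]
  rw [setIntegral_congr_fun measurableSet_Ioc fun k _ => step1 k]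
  -- Step 2: integrability on the product and swap
  have hfin : (volume.restrict (Set.Ioc (0:ℝ) B)) Set.univ < ⊤ := by
    rw [Measure.restrict_apply_univ]; exact measure_Ioc_lt_top
  haveI : IsFiniteMeasure (volume.restrict (Set.Ioc (0:ℝ) B)) := ⟨hfin⟩
  have hcont_unc : Continuous (Function.uncurry f) := by
    apply Continuous.mul
    · exact Complex.continuous_ofReal.comp
        ((ha.comp (continuous_snd.add (continuous_fst.div_const B))).mul
          (hwc.comp continuous_snd))
    · exact Complex.continuous_exp.comp
        ((Complex.continuous_ofReal.comp
          (((continuous_const.mul continuous_fst).div_const B).neg)).mul continuous_const)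
  have hintf : Integrable (Function.uncurry f)
      ((volume.restrict (Set.Ioc (0:ℝ) B)).prod volume) := by
    refine Integrable.mono' ((integrable_const M).mul_prod hwa) hcont_unc.aestronglyMeasurable ?_
    refine Filter.Eventually.of_forall fun p => ?_
    show ‖(↑(a (p.2 + p.1 / B) * w p.2) : ℂ) *
        Complex.exp (↑(-(2 * π * l * p.1 / B)) * Complex.I)‖ ≤ M * |w p.2|
    rw [norm_mul, Complex.norm_real, Complex.norm_exp_ofReal_mul_I, mul_one,
      Real.norm_eq_abs, abs_mul]
    exact mul_le_mul_of_nonneg_right (hM _) (abs_nonneg _)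

  rw [show (∫ k in Set.Ioc (0:ℝ) B, ∫ t : ℝ, f k t) =
      ∫ k, ∫ t : ℝ, f k t ∂volume ∂(volume.restrict (Set.Ioc (0:ℝ) B)) from rfl,
    integral_integral_swap hintf]
  -- Step 3: inner integral
  set g : ℝ → ℂ := fun v => (a v : ℂ) * Complex.exp (↑(-(2 * π * l * v)) * Complex.I) with hg_def
  have hgper : Function.Periodic g 1 := by
    intro v
    simp only [hg_def, hper v]
    congr 1
    have : (↑(-(2 * π * l * (v + 1))) : ℂ) * Complex.I =
        ↑(-(2 * π * l * v)) * Complex.I + ((-(l:ℤ) : ℤ) : ℂ) * (2 * ↑π * Complex.I) := by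
      push_cast; ring
    rw [this, Complex.exp_add, Complex.exp_int_mul_two_pi_mul_I, mul_one]
  have inner : ∀ t : ℝ, (∫ k, f k t ∂(volume.restrict (Set.Ioc (0:ℝ) B)))
      = (↑(w t) * Complex.exp (↑(2 * π * l * t) * Complex.I)) * (B * fourCoef a l) := by
    intro t
    have e1 : (∫ k, f k t ∂(volume.restrict (Set.Ioc (0:ℝ) B)))
        = ∫ k in (0:ℝ)..B, f k t := (intervalIntegral.integral_of_le hB.le).symm
    rw [e1]
    have e2 : ∀ k : ℝ, f k t =
        ↑(w t) * (Complex.exp (↑(2 * π * l * t) * Complex.I) * g (t + k / B)) := by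
      intro k
      have hee : Complex.exp (↑(-(2 * π * l * k / B)) * Complex.I) =
          Complex.exp (↑(2 * π * l * t) * Complex.I) *
            Complex.exp (↑(-(2 * π * l * (t + k / B))) * Complex.I) := by
        rw [← Complex.exp_add]
        congr 1
        push_cast
        ring
      show (↑(a (t + k / B) * w t) : ℂ) * Complex.exp (↑(-(2 * π * l * k / B)) * Complex.I) =
        ↑(w t) * (Complex.exp (↑(2 * π * l * t) * Complex.I) *
          ((a (t + k / B) : ℂ) * Complex.exp (↑(-(2 * π * l * (t + k / B))) * Complex.I)))
      rw [Complex.ofReal_mul, hee]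
      ring
    rw [intervalIntegral.integral_congr (fun k _ => e2 k),
      intervalIntegral.integral_const_mul, intervalIntegral.integral_const_mul]
    have e3 : (∫ k in (0:ℝ)..B, g (t + k / B)) = B • ∫ u in (0:ℝ)..1, g (t + u) := by
      have := intervalIntegral.integral_comp_div (a := (0:ℝ)) (b := B)
        (c := B) (f := fun u => g (t + u)) hB.ne'
      simpa [div_self hB.ne'] using this
    have e4 : (∫ u in (0:ℝ)..1, g (t + u)) = ∫ v in (0:ℝ)..1, g v := by
      rw [intervalIntegral.integral_comp_add_left g t]
      simpa using hgper.intervalIntegral_add_eq t 0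
    have e5 : (∫ v in (0:ℝ)..1, g v) = fourCoef a l := by
      rw [fourCoef]
      refine intervalIntegral.integral_congr fun v _ => ?_
      simp only [hg_def]
      congr 2
      push_cast; ring
    rw [e3, e4, e5, Complex.real_smul]
    ring
  rw [integral_congr_ae (Filter.Eventually.of_forall inner)]
  -- Step 4: pull out constants
  rw [integral_mul_const]
  -- Step 5: the remaining integral
  have hIntCos : Integrable (fun t : ℝ => Real.cos (2 * π * l * t) * w t) :=
    integrable_mul_oscFun j hB (Real.continuous_cos.comp (by fun_prop))
      (fun x => Real.abs_cos_le_one _)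
  have hIntSin : Integrable (fun t : ℝ => Real.sin (2 * π * l * t) * w t) :=
    integrable_mul_oscFun j hB (Real.continuous_sin.comp (by fun_prop))
      (fun x => Real.abs_sin_le_one _)
  have e6 : ∀ t : ℝ, (↑(w t) : ℂ) * Complex.exp (↑(2 * π * l * t) * Complex.I) =
      ↑(Real.cos (2 * π * l * t) * w t) + ↑(Real.sin (2 * π * l * t) * w t) * Complex.I := by
    intro t
    rw [Complex.exp_mul_I, ← Complex.ofReal_cos, ← Complex.ofReal_sin]
    push_cast
    ring
  have cast2 : (∫ t : ℝ, (↑(Real.cos (2 * π * l * t) * w t) : ℂ)) =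
      ↑(∫ t : ℝ, Real.cos (2 * π * l * t) * w t) := integral_ofReal
  have cast3 : (∫ t : ℝ, (↑(Real.sin (2 * π * l * t) * w t) : ℂ)) =
      ↑(∫ t : ℝ, Real.sin (2 * π * l * t) * w t) := integral_ofReal
  have hIntCosC : Integrable (fun t : ℝ => (↑(Real.cos (2 * π * l * t) * w t) : ℂ)) :=
    hIntCos.ofReal
  have hIntSinC : Integrable (fun t : ℝ => (↑(Real.sin (2 * π * l * t) * w t) : ℂ) * Complex.I) :=
    hIntSin.ofReal.mul_const Complex.I
  rw [integral_congr_ae (Filter.Eventually.of_forall e6), integral_add hIntCosC hIntSinC,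
    integral_mul_const, cast2, cast3]
  have hodd : (∫ t : ℝ, Real.cos (2 * π * l * t) * w t) = 0 := by
    have hneg : ∀ t : ℝ, Real.cos (2 * π * l * (-t)) * w (-t) =
        -(Real.cos (2 * π * l * t) * w t) := by
      intro t
      have h1 : Real.cos (2 * π * l * (-t)) = Real.cos (2 * π * l * t) := by
        rw [show 2 * π * (l:ℝ) * (-t) = -(2 * π * l * t) by ring, Real.cos_neg]
      have h2 : w (-t) = -w t := by
        simp only [hw_def, oscFun_sq_even j B t]
        ring
      rw [h1, h2]; ring
    have := integral_neg_eq_self (fun t : ℝ => Real.cos (2 * π * l * t) * w t) volume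
    rw [integral_congr_ae (Filter.Eventually.of_forall hneg)] at this
    rw [integral_neg] at this
    linarith
  have hsin : (∫ t : ℝ, Real.sin (2 * π * l * t) * w t) = oscI j B (2 * π * l) := by
    rw [oscI]
    congr 1
    funext t
    simp only [hw_def]
    ring
  rw [hodd, hsin]
  push_cast
  ring

private lemma ae_zero_of_nonneg_mean_zero {F : ℝ → ℝ} {B : ℝ} (hcont : Continuous F)
    (hmean : (∫ k in Set.Ioc (0:ℝ) B, F k) = 0) (hpos : ∀ k ∈ Set.Ioc (0:ℝ) B, 0 ≤ F k) :
    F =ᵐ[volume.restrict (Set.Ioc (0:ℝ) B)] 0 :=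
  (integral_eq_zero_iff_of_nonneg_ae
    ((ae_restrict_iff' measurableSet_Ioc).2 (.of_forall hpos))
    hcont.integrableOn_Ioc).mp hmean

/-- existence of `k₋, k₊ ∈ [0, B)` with `F_j(k₋) < 0 < F_j(k₊)` is equivalent to
the existence of `l ≥ 1` with `α_l I_j(2πl; B) ≠ 0` (3.18). -/
theorem oscF_signs_iff_nonvanishing_coeff (a : ℝ → ℝ) (ha : ContDiff ℝ 1 a)
    (hper : Function.Periodic a 1) (B : ℝ) (hB : 0 < B) (j : ℕ) (hj : 1 ≤ j) :
    (∃ km ∈ Set.Ico (0 : ℝ) B, ∃ kp ∈ Set.Ico (0 : ℝ) B,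
      (∫ t : ℝ, a (t + km / B) * t * (oscFun j B t) ^ 2) < 0 ∧
      (∫ t : ℝ, a (t + kp / B) * t * (oscFun j B t) ^ 2) > 0) ↔
    ∃ l : ℕ, 1 ≤ l ∧ fourCoef a l * (oscI j B (2 * π * l) : ℂ) ≠ 0 := by
  classical
  haveI : Fact (0 < B) := ⟨hB⟩
  have haC : Continuous a := ha.continuous
  obtain ⟨M, hM⟩ : ∃ M : ℝ, ∀ x, |a x| ≤ M := by
    obtain ⟨M, hMn⟩ := (Metric.isBounded_iff_subset_closedBall 0).1
      (hper.isBounded_of_continuous one_ne_zero haC)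
    exact ⟨M, fun x => by
      have := hMn ⟨x, rfl⟩
      simpa [Metric.mem_closedBall, Real.dist_eq] using this⟩
  have hkey := fun l : ℕ => key_coeff haC hper hM hB j l
  have hφc := oscFun_continuous j B
  have hFdef : ∀ k : ℝ, (∫ t : ℝ, a (t + k / B) * t * (oscFun j B t) ^ 2) = oscF a j B k :=
    fun _ => rfl
  simp only [hFdef]
  set F : ℝ → ℝ := oscF a j B with hF_def
  -- basic facts about F
  have hwa : Integrable (fun t : ℝ => |t * oscFun j B t ^ 2|) := by
    have : Integrable (fun t : ℝ => t * oscFun j B t ^ 2) := by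
      simpa using integrable_mul_oscFun j hB (g := fun _ => (1:ℝ)) (M := 1) continuous_const
        (fun x => by norm_num)
    exact this.abs
  have hFper : ∀ k, F (k + B) = F k := by
    intro k
    simp only [hF_def, oscF]
    congr 1
    funext t
    have h1 : t + (k + B) / B = t + k / B + 1 := by field_simp; ring
    rw [h1, hper]
  have hFB : F B = F 0 := by have := hFper 0; rwa [zero_add] at this
  have hFcont : Continuous F := by
    rw [hF_def]
    have : (oscF a j B) = fun k => ∫ t : ℝ, a (t + k / B) * t * oscFun j B t ^ 2 := rfl
    rw [this]
    refine continuous_of_dominated (fun k => ?_) (fun k => ?_) (hwa.const_mul M) ?_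
    · exact (by fun_prop :
        Continuous fun t : ℝ => a (t + k / B) * t * oscFun j B t ^ 2).aestronglyMeasurable
    · refine Filter.Eventually.of_forall fun t => ?_
      rw [Real.norm_eq_abs, mul_assoc, abs_mul]
      exact mul_le_mul_of_nonneg_right (hM _) (abs_nonneg _)
    · refine Filter.Eventually.of_forall fun t => ?_
      exact (by fun_prop :
        Continuous fun k : ℝ => a (t + k / B) * t * oscFun j B t ^ 2)
  -- the lifted function on the circle
  set Fc : ℝ → ℂ := fun k => ((F k : ℝ) : ℂ) with hFc_def
  have hFc0 : Fc 0 = Fc (0 + B) := by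
    simp only [hFc_def, zero_add, hFB]
  set G : AddCircle B → ℂ := AddCircle.liftIco B 0 Fc with hG_def
  have hGcont : Continuous G :=
    AddCircle.liftIco_continuous hFc0 (Complex.continuous_ofReal.comp hFcont).continuousOn
  have hGint : ∀ n : ℤ, fourierCoeff G n =
      (1 / B : ℝ) • ∫ x in Set.Ioc (0:ℝ) B, fourier (-n) (x : AddCircle B) * Fc x := by
    intro n
    rw [fourierCoeff_eq_intervalIntegral G n 0]
    congr 1
    rw [intervalIntegral.integral_of_le (by linarith : (0:ℝ) ≤ 0 + B), zero_add]
    refine setIntegral_congr_fun measurableSet_Ioc fun x hx => ?_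
    rw [smul_eq_mul]
    congr 1
    rcases lt_or_eq_of_le hx.2 with h | h
    · exact AddCircle.liftIco_coe_apply ⟨hx.1.le, by rwa [zero_add]⟩
    · subst h
      have h2 : ((x:ℝ) : AddCircle x) = ((0:ℝ) : AddCircle x) := by
        rw [AddCircle.coe_period, QuotientAddGroup.mk_zero]
      rw [hG_def, h2]
      rw [AddCircle.liftIco_coe_apply (by rw [zero_add]; exact ⟨le_refl 0, hx.1⟩)]
      simp only [hFc_def]
      exact congrArg _ (by rw [← hFB])
  have hoscI0 : oscI j B (2 * π * ((0:ℕ):ℝ)) = 0 := by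
    simp [oscI]
  -- positive coefficients
  have hco : ∀ l : ℕ, fourierCoeff G ((l:ℤ)) =
      Complex.I * fourCoef a l * (oscI j B (2 * π * l) : ℂ) := by
    intro l
    rw [hGint]
    have e1 : ∀ x : ℝ, fourier (-(l:ℤ)) (x : AddCircle B) * Fc x =
        (↑(F x) : ℂ) * Complex.exp (↑(-(2 * π * l * x / B)) * Complex.I) := by
      intro x
      rw [fourier_coe_apply]
      rw [mul_comm]
      congr 2
      push_cast
      ring
    rw [setIntegral_congr_fun measurableSet_Ioc (fun x _ => e1 x)]
    rw [show (∫ x in Set.Ioc (0:ℝ) B,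
        (↑(F x) : ℂ) * Complex.exp (↑(-(2 * π * l * x / B)) * Complex.I)) =
      Complex.I * B * fourCoef a l * (oscI j B (2 * π * l) : ℂ) from hkey l]
    rw [Complex.real_smul]
    have hBne : (B:ℂ) ≠ 0 := by exact_mod_cast hB.ne'
    push_cast
    field_simp
  -- the mean of F over one period vanishes
  have hmean : (∫ k in Set.Ioc (0:ℝ) B, F k) = 0 := by
    have h0 := hkey 0
    rw [hoscI0] at h0
    have e : ∀ k : ℝ, (↑(oscF a j B k) : ℂ) *
        Complex.exp (↑(-(2 * π * ((0:ℕ):ℝ) * k / B)) * Complex.I) = ↑(oscF a j B k) := by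
      intro k
      norm_num
    rw [setIntegral_congr_fun measurableSet_Ioc (fun k _ => e k)] at h0
    have cast1 : (∫ k in Set.Ioc (0:ℝ) B, (↑(oscF a j B k) : ℂ)) =
        ↑(∫ k in Set.Ioc (0:ℝ) B, oscF a j B k) := integral_ofReal
    rw [cast1] at h0
    norm_num at h0
    exact_mod_cast h0
  -- conjugation symmetry
  have hsym : ∀ n : ℤ, fourierCoeff G (-n) = (starRingEnd ℂ) (fourierCoeff G n) := by
    intro n
    rw [hGint, hGint, Complex.real_smul, Complex.real_smul, map_mul]
    congr 1
    · rw [Complex.conj_ofReal]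
    · rw [← integral_conj]
      refine setIntegral_congr_fun measurableSet_Ioc (fun x _ => ?_)
      rw [map_mul, neg_neg]
      congr 1
      · rw [fourier_neg]
        exact (Complex.conj_conj _).symm
      · simp only [hFc_def, Complex.conj_ofReal]
  constructor
  · rintro ⟨km, hkm, kp, hkp, hFm, hFp⟩
    by_contra hno
    push_neg at hno
    have hno' : ∀ l : ℕ, 1 ≤ l → fourCoef a l * (oscI j B (2 * π * l) : ℂ) = 0 := by
      intro l hl
      by_contra h
      exact absurd (hno l hl) (by simp [h])
    have hvan : ∀ n : ℤ, fourierCoeff G n = 0 := by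
      have hvanN : ∀ l : ℕ, fourierCoeff G ((l:ℤ)) = 0 := by
        intro l
        rcases Nat.eq_zero_or_pos l with h0 | h1
        · subst h0
          rw [hco 0, hoscI0]
          simp
        · rw [hco l, mul_assoc, hno' l h1, mul_zero]
      intro n
      rcases le_or_gt 0 n with hn | hn
      · have : n = ((n.toNat : ℕ) : ℤ) := (Int.toNat_of_nonneg hn).symm
        rw [this, hvanN]
      · have h1 : n = -(((-n).toNat : ℕ) : ℤ) := by
          rw [Int.toNat_of_nonneg (by omega : (0:ℤ) ≤ -n)]; ring
        rw [h1, hsym, hvanN, map_zero]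
    -- Fourier uniqueness
    set G' : C(AddCircle B, ℂ) := ⟨G, hGcont⟩ with hG'_def
    have h2 : fourierBasis.repr (ContinuousMap.toLp (E := ℂ) 2 AddCircle.haarAddCircle ℂ G') = 0 := by
      ext n
      rw [fourierBasis_repr, fourierCoeff_toLp]
      exact hvan n
    have h1 : (ContinuousMap.toLp (E := ℂ) 2 AddCircle.haarAddCircle ℂ G') = 0 :=
      fourierBasis.repr.map_eq_zero_iff.mp h2
    have h3 : ⇑G' =ᵐ[AddCircle.haarAddCircle] (fun _ => (0:ℂ)) := by
      have h4 := (ContinuousMap.coeFn_toLp (p := 2) AddCircle.haarAddCircle (𝕜 := ℂ) G').symm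
      rw [h1] at h4
      exact h4.trans (Lp.coeFn_zero ℂ 2 _)
    have h5 : ⇑G' = fun _ => (0:ℂ) :=
      (Continuous.ae_eq_iff_eq AddCircle.haarAddCircle hGcont continuous_const).mp h3
    have h6 : G (↑km) = 0 := by
      have : G' (↑km) = 0 := by rw [h5]
      exact this
    have h7 : Fc km = 0 := by
      rw [← h6, hG_def]
      exact (AddCircle.liftIco_coe_apply (by rwa [zero_add])).symm
    have h8 : F km = 0 := by
      simpa [hFc_def, Complex.ofReal_eq_zero] using h7
    rw [hF_def] at h8
    linarith [h8 ▸ hFm]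
  · rintro ⟨l, hl1, hl⟩
    by_contra hno
    push_neg at hno
    have hFae : F =ᵐ[volume.restrict (Set.Ioc (0:ℝ) B)] 0 := by
      have hIcoIoc : ∀ (P : ℝ → Prop), (∀ k ∈ Set.Ico (0:ℝ) B, P (F k)) →
          ∀ k ∈ Set.Ioc (0:ℝ) B, P (F k) := by
        intro P hP k hk
        rcases eq_or_lt_of_le hk.2 with h | h
        · rw [h, hFB]
          exact hP 0 ⟨le_refl 0, hB⟩
        · exact hP k ⟨hk.1.le, h⟩
      by_cases hex : ∃ k ∈ Set.Ico (0:ℝ) B, F k < 0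
      · obtain ⟨km, hkm, hFm⟩ := hex
        have hsign : ∀ k ∈ Set.Ico (0:ℝ) B, F k ≤ 0 :=
          fun k hk => hno km hkm k hk hFm
        have hneg : (-F) =ᵐ[volume.restrict (Set.Ioc (0:ℝ) B)] 0 := by
          refine ae_zero_of_nonneg_mean_zero hFcont.neg ?_ ?_
          · simp only [Pi.neg_apply, integral_neg, hmean, neg_zero]
          · exact hIcoIoc (fun x => 0 ≤ -x) (fun k hk => neg_nonneg.2 (hsign k hk))
        filter_upwards [hneg] with x hx
        have : -F x = 0 := hx
        simpa using congrArg Neg.neg this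
      · push_neg at hex
        exact ae_zero_of_nonneg_mean_zero hFcont hmean
          (hIcoIoc (fun x => 0 ≤ x) hex)
    have hzero : (∫ k in Set.Ioc (0:ℝ) B, (↑(oscF a j B k) : ℂ) *
        Complex.exp (↑(-(2 * π * l * k / B)) * Complex.I)) = 0 := by
      refine integral_eq_zero_of_ae ?_
      filter_upwards [hFae] with k hk
      have hk0 : F k = 0 := hk
      show (↑(F k) : ℂ) * _ = 0
      rw [hk0]
      simp
    rw [hkey l] at hzero
    have hBne : (B:ℂ) ≠ 0 := by exact_mod_cast hB.ne'
    have : fourCoef a l * (oscI j B (2 * π * l) : ℂ) = 0 := by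
      have h9 : Complex.I * (B:ℂ) ≠ 0 := mul_ne_zero Complex.I_ne_zero hBne
      have h10 : (Complex.I * (B:ℂ)) * (fourCoef a l * (oscI j B (2 * π * l) : ℂ)) = 0 := by
        rw [← hzero]; ring
      rcases mul_eq_zero.mp h10 with h | h
      · exact absurd h h9
      · exact h
    exact hl this
end
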